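/- arXiv:1612.05768 — 7 statements merged into one kernel-verified Lean document; each statement's English description precedes it below -/
import Mathlib

section
/- The column braiding σ_C is idempotent: σ_C ∘ σ_C = σ_C on Col_A × Col_A. -/
variable {α : Type*} [LinearOrder α]

/-- Schensted insertion of a letter into a single row:
returns the new row and the bumped letter, if any. -/
def rowInsert : List α → α → List α × Option α
  | [], x => ([x], none)
  | y :: r, x =>
    if y ≤ x then
      let p := rowInsert r x
      (y :: p.1, p.2)
    else (x :: r, some y)

/-- Schensted insertion of a letter into a tableau, whose rows are listed
from bottom to top. -/
def tabInsert : List (List α) → α → List (List α)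
  | [], x => [[x]]
  | r :: t, x =>
    match rowInsert r x with
    | (r', none) => r' :: t
    | (r', some y) => r' :: tabInsert t y

/-- Iterated Schensted insertion of a word. -/
def insertWord (t : List (List α)) (w : List α) : List (List α) :=
  w.foldl tabInsert t

/-- Row reading of a tableau: the rows, read from top to bottom. -/
def rowRead (t : List (List α)) : List α := t.reverse.flatten

/-- The tableau associated to a word by the Schensted algorithm. -/
def toTableau (w : List α) : List (List α) := insertWord [] w

/-- The Schensted (plactic) product of two tableaux. -/
def tabProd (t t' : List (List α)) : List (List α) := insertWord t (rowRead t')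

/-- The row order: `u ≻_R l` iff `u` is at most as long as `l` and dominates
it entrywise strictly. -/
def RowDom (u l : List α) : Prop :=
  u.length ≤ l.length ∧
    ∀ i (hu : i < u.length) (hl : i < l.length), l.get ⟨i, hl⟩ < u.get ⟨i, hu⟩

/-- A Young tableau: a bottom-to-top list of nonempty nondecreasing rows,
each row strictly dominating the one below it. -/
def IsTableau (t : List (List α)) : Prop :=
  (∀ r ∈ t, r ≠ [] ∧ r.Pairwise (· ≤ ·)) ∧ List.Chain' (fun low up => RowDom up low) t

/-- A row: a nondecreasing word. -/
def IsRow (r : List α) : Prop := r.Pairwise (· ≤ ·)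

/-- A column: a strictly decreasing word. -/
def IsCol (c : List α) : Prop := c.Pairwise (· > ·)

/-- Number of columns of a tableau: the length of its bottom row. -/
def cols (t : List (List α)) : ℕ := (t.headD []).length

/-- The one-column tableau associated to a column, read from top to bottom. -/
def colTab (c : List α) : List (List α) := c.reverse.map (fun x => [x])

/-- The `j`-th column of a tableau, read from top to bottom. -/
def colOf (t : List (List α)) (j : ℕ) : List α := t.reverse.filterMap (fun r => r[j]?)

/-- The column braiding: `σ_C (c₁, c₂)` consists of the two columns of the
tableau `c₁ * c₂` (the second one being empty if `c₁ * c₂` is a single column,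
in which case the first one is the concatenated column `c₁c₂`). -/
def sigmaC (c1 c2 : List α) : List α × List α :=
  (colOf (tabProd (colTab c1) (colTab c2)) 0, colOf (tabProd (colTab c1) (colTab c2)) 1)

/-- The (zero- or) one-row tableau associated to a row. -/
def rowTab (r : List α) : List (List α) := if r = [] then [] else [r]

/-- The row braiding: `σ_R (r₁, r₂)` is the pair (top row, bottom row) of the
tableau `r₁ * r₂`, the top row being empty if `r₁ * r₂` is a single row
(which is then the concatenation `r₁r₂`). -/
def sigmaR (r1 r2 : List α) : List α × List α :=
  ((tabProd (rowTab r1) (rowTab r2)).getD 1 [], (tabProd (rowTab r1) (rowTab r2)).getD 0 [])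

/-- The left map `σ × Id` of the Yang–Baxter equation. -/
def map12 {X : Type*} (f : X → X → X × X) : X × X × X → X × X × X :=
  fun p => ((f p.1 p.2.1).1, (f p.1 p.2.1).2, p.2.2)

/-- The right map `Id × σ` of the Yang–Baxter equation. -/
def map23 {X : Type*} (f : X → X → X × X) : X × X × X → X × X × X :=
  fun p => (p.1, f p.2.1 p.2.2)



namespace SigmaCAux

variable {α : Type*} [LinearOrder α]

/-- Two-column state: pair rows at the bottom, singleton rows on top. -/
def Z (as bs cs : List α) : List (List α) :=
  List.zipWith (fun a b => [a, b]) as bs ++ cs.map (fun x => [x])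

lemma Z_nil (cs : List α) : Z ([] : List α) [] cs = cs.map (fun x => [x]) := rfl

lemma Z_cons (a b : α) (as bs cs : List α) :
    Z (a :: as) (b :: bs) cs = [a, b] :: Z as bs cs := rfl

lemma C1a : ∀ (cs : List α) (v : α), List.Pairwise (· < ·) (v :: cs) →
    tabInsert (cs.map (fun x => [x])) v = (v :: cs).map (fun x => [x])
  | [], v, _ => rfl
  | c :: cs, v, h => by
    have hvc : ¬ c ≤ v := not_le.mpr ((List.pairwise_cons.mp h).1 c (by simp))
    have hrec := C1a cs c (List.pairwise_cons.mp h).2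
    simp only [List.map_cons, tabInsert, rowInsert, hvc, if_false]
    rw [hrec]
    rfl

lemma C1b : ∀ (as bs cs : List α) (v : α),
    as.length = bs.length →
    List.Pairwise (· < ·) (v :: (as ++ cs)) →
    List.Forall₂ (· ≤ ·) as bs →
    List.Pairwise (· < ·) bs →
    (∀ y ∈ bs, v ≤ y) →
    ∃ as' cs', tabInsert (Z as bs cs) v = Z as' bs cs' ∧
      as' ++ cs' = v :: (as ++ cs) ∧ as'.length = bs.length ∧
      List.Forall₂ (· ≤ ·) as' bs
  | [], bs, cs, v, hlen, hch, _, _, _ => by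
    have hbs : bs = [] := by simpa using hlen.symm
    subst hbs
    refine ⟨[], v :: cs, ?_, by simp, by simp, List.Forall₂.nil⟩
    rw [Z_nil, Z_nil, C1a cs v (by simpa using hch)]
  | a :: as₀, bs, cs, v, hlen, hch, hf, hpb, hvb => by
    obtain ⟨b, bs₀, rfl⟩ : ∃ b bs₀, bs = b :: bs₀ := by
      cases bs with
      | nil => simp at hlen
      | cons b bs₀ => exact ⟨b, bs₀, rfl⟩
    have hva : ¬ a ≤ v := not_le.mpr ((List.pairwise_cons.mp hch).1 a (by simp))
    have hf' := List.forall₂_cons.mp hf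
    have hpb' := List.pairwise_cons.mp hpb
    have hch' := (List.pairwise_cons.mp hch).2
    obtain ⟨A, C, hins, heq, hAlen, hAf⟩ :=
      C1b as₀ bs₀ cs a (by simpa using hlen) hch' hf'.2 hpb'.2
        (fun y hy => le_of_lt (lt_of_le_of_lt hf'.1 (hpb'.1 y hy)))
    refine ⟨v :: A, C, ?_, by simpa using heq, by simpa using hAlen,
      List.Forall₂.cons (hvb b (by simp)) hAf⟩
    rw [Z_cons, Z_cons]
    simp only [tabInsert, rowInsert, hva, if_false]
    rw [hins]

lemma step : ∀ (as bs cs : List α) (β : α),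
    as.length = bs.length →
    List.Forall₂ (· ≤ ·) as bs →
    List.Pairwise (· < ·) (as ++ cs) →
    List.Pairwise (· < ·) bs →
    (∀ y ∈ bs, β < y) →
    ∃ as' bs' cs',
      tabInsert (Z as bs cs) β = Z as' bs' cs' ∧
      as'.length = bs'.length ∧
      List.Forall₂ (· ≤ ·) as' bs' ∧
      List.Pairwise (· < ·) (as' ++ cs') ∧
      List.Pairwise (· < ·) bs' ∧
      (∀ y ∈ bs', β ≤ y) ∧
      (∀ z ∈ as' ++ cs', z = β ∨ z ∈ as ++ cs ∨ z ∈ bs)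
  | [], bs, cs, β, hlen, _, hpc, _, _ => by
    have hbs : bs = [] := by simpa using hlen.symm
    subst hbs
    cases cs with
    | nil =>
      exact ⟨[], [], [β], rfl, rfl, List.Forall₂.nil, by simp, by simp, by simp, by simp⟩
    | cons c cs₀ =>
      by_cases hc : c ≤ β
      · refine ⟨[c], [β], cs₀, ?_, rfl, List.Forall₂.cons hc List.Forall₂.nil,
          by simpa using hpc, by simp, by simp, ?_⟩
        · rw [Z_nil]
          simp only [List.map_cons, tabInsert, rowInsert, hc, if_true]
          rfl
        · intro z hz; right; left; simpa using hz
      · have hch : List.Pairwise (· < ·) (β :: c :: cs₀) := by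
          rw [List.pairwise_cons]
          refine ⟨?_, by simpa using hpc⟩
          intro b hb
          rcases List.mem_cons.mp hb with rfl | hb
          · exact not_le.mp hc
          · exact lt_trans (not_le.mp hc) ((List.pairwise_cons.mp (by simpa using hpc : List.Pairwise (· < ·) (c :: cs₀))).1 b hb)
        refine ⟨[], [], β :: c :: cs₀, ?_, rfl, List.Forall₂.nil, by simpa using hch, by simp,
          by simp, ?_⟩
        · rw [Z_nil, Z_nil, C1a _ _ hch]
        · intro z hz
          have hz' : z = β ∨ z = c ∨ z ∈ cs₀ := by simpa using hz
          rcases hz' with rfl | hz'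
          · exact Or.inl rfl
          · exact Or.inr (Or.inl (by simpa using hz'))
  | a :: as₀, bs, cs, β, hlen, hf, hpc, hpb, hβb => by
    obtain ⟨b, bs₀, rfl⟩ : ∃ b bs₀, bs = b :: bs₀ := by
      cases bs with
      | nil => simp at hlen
      | cons b bs₀ => exact ⟨b, bs₀, rfl⟩
    have hf' := List.forall₂_cons.mp hf
    have hpb' := List.pairwise_cons.mp hpb
    have hpc' := List.pairwise_cons.mp (by simpa using hpc : List.Pairwise (· < ·) (a :: (as₀ ++ cs)))
    by_cases ha : a ≤ β
    · -- bump branch: β replaces b in the second column, b is inserted above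
      have hβlt : β < b := hβb b (by simp)
      have hnb : ¬ b ≤ β := not_le.mpr hβlt
      obtain ⟨A, B, C, hins, hABlen, hABf, hABpc, hBpb, hBle, hmem⟩ :=
        step as₀ bs₀ cs b (by simpa using hlen) hf'.2 hpc'.2 hpb'.2 hpb'.1
      refine ⟨a :: A, β :: B, C, ?_, by simpa using hABlen,
        List.Forall₂.cons ha hABf, ?_, ?_, ?_, ?_⟩
      · rw [Z_cons]
        simp only [tabInsert, rowInsert, ha, if_true, hnb, if_false]
        rw [hins]
        rfl
      · -- Pairwise (a :: (A ++ C))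
        rw [List.cons_append, List.pairwise_cons]
        refine ⟨?_, hABpc⟩
        intro z hz
        rcases hmem z hz with rfl | hz' | hz'
        · exact lt_of_le_of_lt ha hβlt
        · exact hpc'.1 z hz'
        · exact lt_of_le_of_lt hf'.1 (hpb'.1 z hz')
      · -- Pairwise (β :: B)
        rw [List.pairwise_cons]
        exact ⟨fun z hz => lt_of_lt_of_le hβlt (hBle z hz), hBpb⟩
      · intro y hy
        rcases List.mem_cons.mp hy with rfl | hy'
        · exact le_refl _
        · exact le_of_lt (lt_of_lt_of_le hβlt (hBle y hy'))
      · intro z hz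
        have hz' : z = a ∨ z ∈ A ++ C := by simpa using hz
        rcases hz' with rfl | hz'
        · exact Or.inr (Or.inl (by simp))
        · rcases hmem z hz' with rfl | h' | h'
          · exact Or.inr (Or.inr (by simp))
          · have : z ∈ a :: (as₀ ++ cs) := by simp [h']
            exact Or.inr (Or.inl (by simpa using this))
          · exact Or.inr (Or.inr (by simp [h']))
    · -- shift branch: β goes below the first column which shifts up
      have hch : List.Pairwise (· < ·) (β :: ((a :: as₀) ++ cs)) := by
        rw [List.pairwise_cons]
        refine ⟨?_, hpc⟩
        intro z hz
        have hz' : z = a ∨ z ∈ as₀ ++ cs := by simpa using hz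
        rcases hz' with rfl | hz'
        · exact not_le.mp ha
        · exact lt_trans (not_le.mp ha) (hpc'.1 z hz')
      obtain ⟨as', cs', hins, heq, hlen', hf₂⟩ :=
        C1b (a :: as₀) (b :: bs₀) cs β hlen hch hf hpb (fun y hy => le_of_lt (hβb y hy))
      refine ⟨as', b :: bs₀, cs', hins, hlen', hf₂, ?_, hpb, fun y hy => le_of_lt (hβb y hy), ?_⟩
      · rw [heq]; exact hch
      · intro z hz
        rw [heq] at hz
        rcases List.mem_cons.mp hz with rfl | hz'
        · exact Or.inl rfl
        · exact Or.inr (Or.inl hz')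

lemma fold : ∀ (w : List α) (as bs cs : List α),
    as.length = bs.length →
    List.Forall₂ (· ≤ ·) as bs →
    List.Pairwise (· < ·) (as ++ cs) →
    List.Pairwise (· < ·) bs →
    List.Pairwise (· > ·) w →
    (∀ x ∈ w, ∀ y ∈ bs, x < y) →
    ∃ as' bs' cs',
      insertWord (Z as bs cs) w = Z as' bs' cs' ∧
      as'.length = bs'.length ∧
      List.Forall₂ (· ≤ ·) as' bs' ∧
      List.Pairwise (· < ·) bs'
  | [], as, bs, cs, hlen, hf, _, hpb, _, _ => ⟨as, bs, cs, rfl, hlen, hf, hpb⟩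
  | β :: w', as, bs, cs, hlen, hf, hpc, hpb, hw, hlink => by
    obtain ⟨A, B, C, hins, h1, h2, h3, h4, h5, _⟩ :=
      step as bs cs β hlen hf hpc hpb (fun y hy => hlink β (by simp) y hy)
    have hw' := List.pairwise_cons.mp hw
    obtain ⟨A', B', C', hins', k1, k2, k4⟩ :=
      fold w' A B C h1 h2 h3 h4 hw'.2
        (fun x hx y hy => lt_of_lt_of_le (hw'.1 x hx) (h5 y hy))
    refine ⟨A', B', C', ?_, k1, k2, k4⟩
    rw [insertWord, List.foldl_cons, hins]
    exact hins'

lemma ins1 : ∀ (as bs : List α) (x : α) (xs : List α) (β : α),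
    as.length = bs.length →
    List.Forall₂ (· ≤ ·) (as ++ [x]) (β :: bs) →
    List.Pairwise (· < ·) (β :: bs) →
    tabInsert (Z as bs (x :: xs)) β = Z (as ++ [x]) (β :: bs) xs
  | [], bs, x, xs, β, hlen, hf, _ => by
    have hbs : bs = [] := by simpa using hlen.symm
    subst hbs
    have hxβ : x ≤ β := by simpa using hf
    rw [Z_nil]
    simp only [List.map_cons, tabInsert, rowInsert, hxβ, if_true]
    rfl
  | a :: as₀, bs, x, xs, β, hlen, hf, hp => by
    obtain ⟨b, bs₀, rfl⟩ : ∃ b bs₀, bs = b :: bs₀ := by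
      cases bs with
      | nil => simp at hlen
      | cons b bs₀ => exact ⟨b, bs₀, rfl⟩
    have hf' := List.forall₂_cons.mp (by simpa using hf :
      List.Forall₂ (· ≤ ·) (a :: (as₀ ++ [x])) (β :: b :: bs₀))
    have hp' := List.pairwise_cons.mp hp
    have hβb : ¬ b ≤ β := not_le.mpr (hp'.1 b (by simp))
    have hrec := ins1 as₀ bs₀ x xs b (by simpa using hlen) hf'.2 hp'.2
    rw [Z_cons]
    simp only [tabInsert, rowInsert, hf'.1, if_true, hβb, if_false]
    rw [hrec]
    rfl

lemma forall₂_shift : ∀ (as bs : List α) (x b : α),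
    List.Forall₂ (· ≤ ·) (as ++ [x]) (b :: bs) →
    List.Pairwise (· < ·) (b :: bs) →
    List.Forall₂ (· ≤ ·) as bs
  | [], bs, x, b, hf, _ => by
    have : bs = [] := by
      have := List.Forall₂.length_eq hf
      simpa using this.symm
    subst this; exact List.Forall₂.nil
  | a :: as₀, bs, x, b, hf, hp => by
    obtain ⟨b', bs₀, rfl⟩ : ∃ b' bs₀, bs = b' :: bs₀ := by
      cases bs with
      | nil =>
        have := List.Forall₂.length_eq hf
        simp at this
      | cons b' bs₀ => exact ⟨b', bs₀, rfl⟩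
    have hf' := List.forall₂_cons.mp (by simpa using hf :
      List.Forall₂ (· ≤ ·) (a :: (as₀ ++ [x])) (b :: b' :: bs₀))
    have hp' := List.pairwise_cons.mp hp
    exact List.Forall₂.cons (le_of_lt (lt_of_le_of_lt hf'.1 (hp'.1 b' (by simp))))
      (forall₂_shift as₀ bs₀ x b' hf'.2 hp'.2)

lemma core : ∀ (bs as cs : List α),
    as.length = bs.length →
    List.Forall₂ (· ≤ ·) as bs →
    List.Pairwise (· < ·) bs →
    insertWord ((as ++ cs).map (fun x => [x])) bs.reverse = Z as bs cs
  | [], as, cs, hlen, _, _ => by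
    have : as = [] := by simpa using hlen
    subst this
    simp [insertWord, Z_nil]
  | b :: bs₀, as, cs, hlen, hf, hp => by
    obtain ⟨as₀, x, rfl⟩ : ∃ as₀ x, as = as₀ ++ [x] := by
      rcases as.eq_nil_or_concat with rfl | ⟨as₀, x, h⟩
      · simp at hlen
      · exact ⟨as₀, x, by simpa [List.concat_eq_append] using h⟩
    have hp' := List.pairwise_cons.mp hp
    have hlen' : as₀.length = bs₀.length := by simpa using hlen
    have hrec := core bs₀ as₀ (x :: cs) hlen' (forall₂_shift as₀ bs₀ x b hf hp) hp'.2
    have hcat : as₀ ++ x :: cs = (as₀ ++ [x]) ++ cs := by simp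
    rw [List.reverse_cons, insertWord, List.foldl_append]
    rw [hcat] at hrec
    rw [show (List.foldl tabInsert ((as₀ ++ [x] ++ cs).map fun x => [x]) bs₀.reverse)
      = insertWord ((as₀ ++ [x] ++ cs).map fun x => [x]) bs₀.reverse from rfl, hrec]
    simpa using ins1 as₀ bs₀ x cs b hlen' hf hp

lemma flatten_map_sg : ∀ (c : List α), (c.map (fun x => [x])).flatten = c
  | [] => rfl
  | a :: c => by simpa using flatten_map_sg c

lemma rowRead_colTab (c : List α) : rowRead (colTab c) = c := by
  have h1 : (colTab c).reverse = c.map (fun x => [x]) := by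
    rw [colTab, List.map_reverse, List.reverse_reverse]
  rw [rowRead, h1, flatten_map_sg]

lemma filterMap_zip0 : ∀ (as bs : List α), as.length = bs.length →
    (List.zipWith (fun a b => [a, b]) as bs).filterMap (fun r => r[0]?) = as
  | [], [], _ => rfl
  | [], b :: bs, h => by simp at h
  | a :: as, [], h => by simp at h
  | a :: as, b :: bs, h => by
    simp only [List.zipWith_cons_cons, List.filterMap_cons]
    rw [filterMap_zip0 as bs (by simpa using h)]
    rfl

lemma filterMap_zip1 : ∀ (as bs : List α), as.length = bs.length →
    (List.zipWith (fun a b => [a, b]) as bs).filterMap (fun r => r[1]?) = bs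
  | [], [], _ => rfl
  | [], b :: bs, h => by simp at h
  | a :: as, [], h => by simp at h
  | a :: as, b :: bs, h => by
    simp only [List.zipWith_cons_cons, List.filterMap_cons]
    rw [filterMap_zip1 as bs (by simpa using h)]
    rfl

lemma fmsg0 : ∀ (cs : List α), List.filterMap (fun r => r[0]?) (cs.map fun x => [x]) = cs
  | [] => rfl
  | c :: cs => by
    rw [List.map_cons, List.filterMap_cons]
    rw [fmsg0 cs]
    rfl

lemma fmsg1 : ∀ (cs : List α), List.filterMap (fun r => r[1]?) (cs.map fun x => [x]) = []
  | [] => rfl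
  | c :: cs => by
    rw [List.map_cons, List.filterMap_cons]
    rw [fmsg1 cs]
    simp

lemma colZ0 (as bs cs : List α) (h : as.length = bs.length) :
    colOf (Z as bs cs) 0 = cs.reverse ++ as.reverse := by
  rw [colOf, List.filterMap_reverse, Z, List.filterMap_append, filterMap_zip0 as bs h]
  rw [fmsg0 cs]
  simp

lemma colZ1 (as bs cs : List α) (h : as.length = bs.length) :
    colOf (Z as bs cs) 1 = bs.reverse := by
  rw [colOf, List.filterMap_reverse, Z, List.filterMap_append, filterMap_zip1 as bs h]
  rw [fmsg1 cs]
  simp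

lemma tabProd_colTab (X Y : List α) :
    tabProd (colTab X) (colTab Y) = insertWord (X.reverse.map fun x => [x]) Y := by
  rw [tabProd, rowRead_colTab]
  rfl

end SigmaCAux

/-- The column braiding `σ_C` is idempotent on pairs of columns. -/
theorem sigmaC_idempotent (c1 c2 : List α) (h1 : IsCol c1) (h2 : IsCol c2) :
    sigmaC (sigmaC c1 c2).1 (sigmaC c1 c2).2 = sigmaC c1 c2 := by
  classical
  obtain ⟨as, bs, cs, hT, hlen, hf, hpb⟩ :=
    SigmaCAux.fold c2 [] [] c1.reverse rfl List.Forall₂.nil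
      (by simpa using List.pairwise_reverse.mpr h1)
      (by simp) h2 (by simp)
  have hstart : SigmaCAux.Z ([] : List α) [] c1.reverse = colTab c1 := by
    rw [SigmaCAux.Z_nil]; rfl
  have hT1 : tabProd (colTab c1) (colTab c2) = SigmaCAux.Z as bs cs := by
    rw [SigmaCAux.tabProd_colTab]
    rw [← hT, hstart]
    rfl
  have hs1 : sigmaC c1 c2 = (cs.reverse ++ as.reverse, bs.reverse) := by
    rw [sigmaC, hT1, SigmaCAux.colZ0 as bs cs hlen, SigmaCAux.colZ1 as bs cs hlen]
  have hT2 : tabProd (colTab (cs.reverse ++ as.reverse)) (colTab bs.reverse)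
      = SigmaCAux.Z as bs cs := by
    rw [SigmaCAux.tabProd_colTab]
    have hrev : (cs.reverse ++ as.reverse).reverse = as ++ cs := by simp
    rw [hrev]
    exact SigmaCAux.core bs as cs hlen hf hpb
  rw [hs1]
  show sigmaC (cs.reverse ++ as.reverse) bs.reverse = _
  rw [sigmaC, hT2, SigmaCAux.colZ0 as bs cs hlen, SigmaCAux.colZ1 as bs cs hlen]
end

section
/- If σ_R(r1, r2) = (r3, r4) for rows r1, r2, then r3 is a subword of r1 obtained by deleting some letters, r2 is a subword of r4, and r3 strictly dominates r4 and r2 in the row order (x1...xs ≻_R y1...yt iff s ≤ t and x_i > y_i for all i ≤ s) whenever r3 is non-empty. -/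
variable {α : Type*} [LinearOrder α]

lemma rowInsert_of_le (b : List α) (x : α) (h : ∀ y ∈ b, y ≤ x) :
    rowInsert b x = (b ++ [x], none) := by
  induction b with
  | nil => simp [rowInsert]
  | cons y r ih =>
      have hy : y ≤ x := h y (by simp)
      simp [rowInsert, hy, ih fun z hz => h z (by simp [hz])]

lemma rowInsert_spec (b : List α) (x : α) :
    ((∀ y ∈ b, y ≤ x) ∧ rowInsert b x = (b ++ [x], none)) ∨
    (∃ k, ∃ hk : k < b.length, (∀ j (hj : j < k), b[j]'(hj.trans hk) ≤ x) ∧ x < b[k] ∧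
      rowInsert b x = (b.set k x, some b[k])) := by
  induction b with
  | nil => left; exact ⟨by simp, by simp [rowInsert]⟩
  | cons y r ih =>
      by_cases hy : y ≤ x
      · rcases ih with ⟨hall, heq⟩ | ⟨k, hk, hmin, hbk, heq⟩
        · left
          refine ⟨?_, by simp [rowInsert, hy, heq]⟩
          intro z hz
          rcases List.mem_cons.mp hz with rfl | hz
          · exact hy
          · exact hall z hz
        · right
          refine ⟨k + 1, by simpa using Nat.succ_lt_succ hk, ?_, by simpa using hbk, ?_⟩
          · intro j hj
            cases j with
            | zero => simpa using hy
            | succ j => simpa using hmin j (by omega)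
          · simp [rowInsert, hy, heq]
      · right
        push_neg at hy
        exact ⟨0, by simp, by simp, by simpa using hy, by simp [rowInsert, not_le.mpr hy]⟩

lemma take_set_of_le (l : List α) (k m : ℕ) (x : α) (h : m ≤ k) :
    (l.set k x).take m = l.take m := by
  apply List.ext_getElem
  · simp
  · intro i h1 h2
    simp only [List.length_take, List.length_set] at h1
    simp only [List.getElem_take]
    exact List.getElem_set_ne (by omega) _

lemma drop_set_of_lt (l : List α) (k m : ℕ) (x : α) (h : k < m) :
    (l.set k x).drop m = l.drop m := by
  apply List.ext_getElem
  · simp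
  · intro i h1 h2
    simp only [List.getElem_drop]
    exact List.getElem_set_ne (by omega) _

lemma take_succ_set_self (l : List α) (k : ℕ) (x : α) (hk : k < l.length) :
    (l.set k x).take (k+1) = l.take k ++ [x] := by
  apply List.ext_getElem
  · simp; omega
  · intro i h1 h2
    simp only [List.length_take, List.length_set] at h1
    simp only [List.getElem_take]
    rcases Nat.lt_or_ge i k with hik | hik
    · rw [List.getElem_set_ne (by omega) _,
        List.getElem_append_left (by simpa [List.length_take] using by omega)]
      simp [List.getElem_take]
    · have hek : i = k := by omega
      subst hek
      rw [List.getElem_set_self (by simpa using hk),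
        List.getElem_concat_length (by simp; omega)]

lemma insert_main (w : List α) : ∀ (b u : List α), b.Pairwise (·≤·) → u.Pairwise (·≤·) →
    w.Pairwise (·≤·) →
    u.length ≤ b.length →
    (∀ j (hj : j < u.length) (hj' : j < b.length), b[j] < u[j]) →
    (∀ x ∈ w, ∀ j (hj : j < u.length) (hj' : j < b.length), b[j] ≤ x) →
    (∀ x ∈ w, ∀ a ∈ u, ∀ j (hj : j < b.length), x < b[j] → a ≤ b[j]) →
    ∃ v b', insertWord [b, u] w = [b', u ++ v] ∧
      (u ++ v).length ≤ b'.length ∧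
      (∀ j (hj : j < (u++v).length) (hj' : j < b'.length), b'[j] < (u++v)[j]) ∧
      (∀ m, m ≤ b.length → (∀ x ∈ w, ∀ j (hj : j < m) (hj' : j < b.length), b[j] ≤ x) →
        v.Sublist (b.drop m) ∧ w.Sublist (b'.drop m) ∧ b'.take m = b.take m) ∧
      v.length ≤ w.length ∧
      (∀ j (hj : j < v.length) (hj' : j < w.length), w[j] < v[j]) := by
  induction w with
  | nil =>
    intro b u hb hu hw hlen hdom hge hv
    refine ⟨[], b, by simp [insertWord], by simpa using hlen, ?_, ?_, by simp, by simp⟩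
    · intro j hj hj'
      simp only [List.append_nil] at hj ⊢
      exact hdom j hj hj'
    · intro m hm _
      exact ⟨by simp, by simp, rfl⟩
  | cons x w ih =>
    intro b u hb hu hw hlen hdom hge hv
    have hxw : ∀ z ∈ w, x ≤ z := fun z hz => (List.pairwise_cons.mp hw).1 z hz
    have hw' : w.Pairwise (·≤·) := hw.of_cons
    rcases rowInsert_spec b x with ⟨hall, heq⟩ | ⟨k, hk, hmin, hbk, heq⟩
    · -- append case
      have hstep : insertWord [b, u] (x :: w) = insertWord [b ++ [x], u] w := by
        simp [insertWord, tabInsert, heq]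
      have hb1 : (b ++ [x]).Pairwise (·≤·) :=
        List.pairwise_append.mpr ⟨hb, by simp, fun a ha c hc => by
          simp only [List.mem_singleton] at hc; subst hc; exact hall a ha⟩
      obtain ⟨v', b'', hres, hlen', hdom', hCm', hvl', hvw'⟩ :=
        ih (b ++ [x]) u hb1 hu hw'
          (by simp; omega)
          (fun j hj hj' => by
            have hjb : j < b.length := lt_of_lt_of_le hj hlen
            rw [List.getElem_append_left hjb]
            exact hdom j hj hjb)
          (fun z hz j hj hj' => by
            have hjb : j < b.length := lt_of_lt_of_le hj hlen
            rw [List.getElem_append_left hjb]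
            exact hge z (List.mem_cons_of_mem _ hz) j hj hjb)
          (fun z hz a ha j hj hlt => by
            rcases Nat.lt_or_ge j b.length with hjb | hjb
            · rw [List.getElem_append_left hjb] at hlt ⊢
              exact hv z (List.mem_cons_of_mem _ hz) a ha j hjb hlt
            · have hjb' : j - b.length = 0 := by
                simp only [List.length_append, List.length_cons, List.length_nil] at hj; omega
              rw [List.getElem_append_right hjb] at hlt
              simp only [hjb', List.getElem_cons_zero] at hlt
              exact absurd hlt (not_lt.mpr (hxw z hz)))
      obtain ⟨hv'nil, hwsub, htake⟩ := hCm' (b.length + 1) (by simp)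
        (fun z hz j hj hj' => by
          rcases Nat.lt_or_ge j b.length with hjb | hjb
          · rw [List.getElem_append_left hjb]
            exact (hall _ (List.getElem_mem hjb)).trans (hxw z hz)
          · have hje : j = b.length := by
              simp only [List.length_append, List.length_cons, List.length_nil] at hj'; omega
            subst hje
            rw [List.getElem_concat_length rfl]
            exact hxw z hz)
      have hv0 : v' = [] := by
        have hnil : List.drop (b.length + 1) (b ++ [x]) = ([] : List α) := by
          apply List.drop_eq_nil_of_le
          simp
        rw [hnil] at hv'nil
        exact List.sublist_nil.mp hv'nil
      have htk : b''.take (b.length + 1) = b ++ [x] := by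
        rw [htake]
        simp
      have hb'' : b'' = b ++ (x :: b''.drop (b.length + 1)) := by
        conv_lhs => rw [← List.take_append_drop (b.length + 1) b'']
        rw [htk, List.append_assoc]
        rfl
      refine ⟨v', b'', by rw [hstep]; exact hres, hlen', hdom', ?_, hvl'.trans (by simp), ?_⟩
      · intro m hm hmge
        refine ⟨by simp [hv0], ?_, ?_⟩
        · have hdm : b''.drop m = b.drop m ++ (x :: b''.drop (b.length + 1)) := by
            conv_lhs => rw [hb'']
            rw [List.drop_append_of_le_length hm]
          rw [hdm]
          exact (hwsub.cons₂ x).trans (List.sublist_append_right _ _)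
        · calc b''.take m = (b''.take (b.length + 1)).take m := by
                rw [List.take_take]; congr 1; omega
          _ = (b ++ [x]).take m := by rw [htk]
          _ = b.take m := List.take_append_of_le_length hm
      · intro j hj hj'
        have hjw : j < w.length := lt_of_lt_of_le hj hvl'
        have h1 : (x :: w)[j] ≤ w[j] := by
          have h2 := List.pairwise_iff_getElem.mp hw j (j+1)
            (by simp; omega) (by simp; omega) (Nat.lt_succ_self j)
          simpa using h2
        exact lt_of_le_of_lt h1 (hvw' j hj hjw)
    · -- bump case
      have hku : u.length ≤ k := by
        by_contra hc
        push_neg at hc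
        exact absurd (hge x (by simp) k hc hk) (not_le.mpr hbk)
      have hyu : ∀ a ∈ u, a ≤ b[k] := fun a ha => hv x (by simp) a ha k hk hbk
      have hstep : insertWord [b, u] (x :: w) = insertWord [b.set k x, u ++ [b[k]]] w := by
        simp [insertWord, tabInsert, heq, rowInsert_of_le u _ hyu]
      have hbs : (b.set k x).Pairwise (·≤·) := by
        rw [List.pairwise_iff_getElem]
        intro i j hi hj hij
        have hi' : i < b.length := by simpa using hi
        have hj' : j < b.length := by simpa using hj
        rw [List.getElem_set, List.getElem_set]
        split
        · split
          · exact le_rfl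
          · next hik hjk =>
              exact le_of_lt (lt_of_lt_of_le hbk
                (List.pairwise_iff_getElem.mp hb k j (by omega) hj' (by omega)))
        · split
          · next hik hjk => exact hmin i (by omega)
          · exact List.pairwise_iff_getElem.mp hb i j hi' hj' hij
      have hus : (u ++ [b[k]]).Pairwise (·≤·) :=
        List.pairwise_append.mpr ⟨hu, by simp, fun a ha c hc => by
          simp only [List.mem_singleton] at hc; subst hc; exact hyu a ha⟩
      have hdom2 : ∀ j (hj : j < (u ++ [b[k]]).length) (hj' : j < (b.set k x).length),
          (b.set k x)[j] < (u ++ [b[k]])[j] := by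
        intro j hj hj'
        simp only [List.length_append, List.length_cons, List.length_nil,
          List.length_set] at hj hj'
        rcases Nat.lt_or_ge j u.length with hju | hju
        · rw [List.getElem_append_left hju, List.getElem_set_ne (by omega) _]
          exact hdom j hju (by omega)
        · have hj0 : j = u.length := by omega
          subst hj0
          rw [List.getElem_concat_length rfl, List.getElem_set]
          split
          · exact hbk
          · next hek => exact lt_of_le_of_lt (hmin u.length (by omega)) hbk
      have hge2 : ∀ z ∈ w, ∀ j (hj : j < (u ++ [b[k]]).length) (hj' : j < (b.set k x).length),
          (b.set k x)[j] ≤ z := by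
        intro z hz j hj hj'
        simp only [List.length_append, List.length_cons, List.length_nil,
          List.length_set] at hj hj'
        have hxz : x ≤ z := hxw z hz
        rcases Nat.lt_or_ge j u.length with hju | hju
        · rw [List.getElem_set_ne (by omega) _]
          exact hge z (by simp [hz]) j hju (by omega)
        · have hj0 : j = u.length := by omega
          subst hj0
          rw [List.getElem_set]
          split
          · exact hxz
          · next hek => exact le_trans (hmin _ (by omega)) hxz
      have hv2 : ∀ z ∈ w, ∀ a ∈ u ++ [b[k]], ∀ j (hj : j < (b.set k x).length),
          z < (b.set k x)[j] → a ≤ (b.set k x)[j] := by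
        intro z hz a ha j hj hlt
        simp only [List.length_set] at hj
        rcases eq_or_ne j k with rfl | hjk
        · rw [List.getElem_set_self (by simpa using hk)] at hlt
          exact absurd hlt (not_lt.mpr (hxw z hz))
        · rw [List.getElem_set_ne (Ne.symm hjk) _] at hlt ⊢
          rcases List.mem_append.mp ha with hau | hay
          · exact hv z (by simp [hz]) a hau j hj hlt
          · simp only [List.mem_singleton] at hay
            subst hay
            have hkj : k < j := by
              rcases Nat.lt_or_ge j k with hc | hc
              · exact absurd (le_trans (hmin j hc) (hxw z hz)) (not_le.mpr hlt)
              · omega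
            exact List.pairwise_iff_getElem.mp hb k j hk hj hkj
      obtain ⟨v', b'', hres, hlen', hdom', hCm', hvl', hvw'⟩ :=
        ih (b.set k x) (u ++ [b[k]]) hbs hus hw' (by simp; omega) hdom2 hge2 hv2
      rw [show (u ++ [b[k]]) ++ v' = u ++ (b[k] :: v') by simp] at hres hlen' hdom'
      refine ⟨b[k] :: v', b'', by rw [hstep]; exact hres, hlen', hdom', ?_, by simpa using hvl', ?_⟩
      · intro m hm hmge
        have hmk : m ≤ k := by
          by_contra hc
          push_neg at hc
          exact absurd (hmge x (by simp) k hc hk) (not_le.mpr hbk)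
        obtain ⟨hv'sub, hwsub, htake⟩ := hCm' (k+1) (by simp; omega)
          (fun z hz j hj hj' => by
            simp only [List.length_set] at hj'
            rcases eq_or_ne j k with rfl | hjk
            · rw [List.getElem_set_self (by simpa using hk)]
              exact hxw z hz
            · rw [List.getElem_set_ne (Ne.symm hjk) _]
              exact le_trans (hmin j (by omega)) (hxw z hz))
        refine ⟨?_, ?_, ?_⟩
        · have h1 : v'.Sublist (b.drop (k+1)) := by
            rwa [drop_set_of_lt _ _ _ _ (Nat.lt_succ_self k)] at hv'sub
          have h2 : (b[k] :: v').Sublist (b.drop k) := by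
            rw [List.drop_eq_getElem_cons hk]
            exact h1.cons₂ _
          have h3 : (b.drop k).Sublist (b.drop m) := by
            have he : b.drop k = List.drop (k - m) (b.drop m) := by
              rw [List.drop_drop]; congr 1; omega
            rw [he]; exact List.drop_sublist _ _
          exact h2.trans h3
        · have htk : b''.take (k+1) = (b.take k) ++ [x] := by
            rw [htake, take_succ_set_self _ _ _ hk]
          have hdm : b''.drop m = (b.take k).drop m ++ (x :: b''.drop (k+1)) := by
            conv_lhs => rw [← List.take_append_drop (k+1) b'']
            rw [htk, List.append_assoc,
              List.drop_append_of_le_length (by simp; omega)]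
            rfl
          rw [hdm]
          exact (hwsub.cons₂ x).trans (List.sublist_append_right _ _)
        · calc b''.take m = (b''.take (k+1)).take m := by
                rw [List.take_take]; congr 1; omega
          _ = ((b.set k x).take (k+1)).take m := by rw [htake]
          _ = (b.set k x).take m := by rw [List.take_take]; congr 1; omega
          _ = b.take m := take_set_of_le _ _ _ _ hmk
      · intro j hj hj'
        cases j with
        | zero => simpa using hbk
        | succ j =>
          simp only [List.getElem_cons_succ]
          exact hvw' j (by simpa using hj) (by simpa using hj')

lemma tabInsert_pad (t t' : List (List α)) (x : α)
    (h : t' = t ∨ ∃ q, t = [q] ∧ t' = [q, []]) :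
    tabInsert t' x = tabInsert t x ∨
      ∃ q, tabInsert t x = [q] ∧ tabInsert t' x = [q, []] := by
  rcases h with rfl | ⟨q, rfl, rfl⟩
  · left; rfl
  · rcases hq : rowInsert q x with ⟨q', o⟩
    cases o with
    | none => right; exact ⟨q', by simp [tabInsert, hq], by simp [tabInsert, hq]⟩
    | some y => left; simp [tabInsert, hq, rowInsert]

lemma insertWord_pad (w : List α) : ∀ t t' : List (List α),
    (t' = t ∨ ∃ q, t = [q] ∧ t' = [q, []]) →
    (insertWord t' w = insertWord t w ∨
      ∃ p, insertWord t w = [p] ∧ insertWord t' w = [p, []]) := by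
  induction w with
  | nil =>
    intro t t' h
    rcases h with rfl | ⟨q, rfl, rfl⟩
    · left; rfl
    · right; exact ⟨q, rfl, rfl⟩
  | cons x w ih =>
    intro t t' h
    exact ih _ _ (tabInsert_pad t t' x h)

lemma insert_single (b w : List α) (hb : b.Pairwise (·≤·)) (hw : w.Pairwise (·≤·)) :
    ∃ v b', (insertWord [b] w).getD 0 [] = b' ∧ (insertWord [b] w).getD 1 [] = v ∧
      v.length ≤ b'.length ∧
      (∀ j (hj : j < v.length) (hj' : j < b'.length), b'[j] < v[j]) ∧
      (∀ m, m ≤ b.length → (∀ x ∈ w, ∀ j (hj : j < m) (hj' : j < b.length), b[j] ≤ x) →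
        v.Sublist (b.drop m) ∧ w.Sublist (b'.drop m) ∧ b'.take m = b.take m) ∧
      v.length ≤ w.length ∧
      (∀ j (hj : j < v.length) (hj' : j < w.length), w[j] < v[j]) := by
  obtain ⟨v, b', hres, hlen, hdom, hCm, hvl, hvw⟩ :=
    insert_main w b [] hb (by simp) hw (by simp) (by simp) (by simp) (by simp)
  simp only [List.nil_append] at hres hlen hdom
  rcases insertWord_pad w [b] [b, []] (Or.inr ⟨b, rfl, rfl⟩) with hEq | ⟨p, hp1, hp2⟩
  · rw [hres] at hEq
    exact ⟨v, b', by rw [← hEq]; rfl, by rw [← hEq]; rfl, hlen, hdom, hCm, hvl, hvw⟩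
  · rw [hres] at hp2
    have hb' : b' = p := by injection hp2
    have hv : v = [] := by
      have := hp2
      injection this with _ h2
      injection h2
    subst hb'; subst hv
    exact ⟨[], b', by rw [hp1]; rfl, by rw [hp1]; rfl, hlen, hdom, hCm, hvl, hvw⟩

/-- If `σ_R (r₁, r₂) = (r₃, r₄)` for rows `r₁, r₂`, then `r₃` is a subword of
`r₁`, `r₂` is a subword of `r₄`, and, whenever `r₃` is non-empty, `r₃`
strictly dominates both `r₄` and `r₂` in the row order. -/
theorem sigmaR_comparison (r1 r2 r3 r4 : List α) (h1 : IsRow r1) (h2 : IsRow r2)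
    (h : sigmaR r1 r2 = (r3, r4)) :
    r3.Sublist r1 ∧ r2.Sublist r4 ∧ (r3 ≠ [] → RowDom r3 r4 ∧ RowDom r3 r2) := by
  have hprod : tabProd (rowTab r1) (rowTab r2) = insertWord (rowTab r1) r2 := by
    unfold tabProd
    congr 1
    cases r2 with
    | nil => simp [rowRead, rowTab]
    | cons a l => simp [rowRead, rowTab]
  have h3 := congrArg Prod.fst h
  have h4 := congrArg Prod.snd h
  simp only [sigmaR] at h3 h4
  rw [hprod] at h3 h4
  by_cases hr1 : r1 = []
  · subst hr1
    have hrt : rowTab ([] : List α) = [] := by simp [rowTab]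
    rw [hrt] at h3 h4
    cases r2 with
    | nil =>
      have e3 : r3 = [] := by simpa [insertWord] using h3.symm
      have e4 : r4 = [] := by simpa [insertWord] using h4.symm
      subst e3; subst e4
      exact ⟨List.Sublist.refl _, List.Sublist.refl _, fun hne => absurd rfl hne⟩
    | cons x w' =>
      have hE : insertWord ([] : List (List α)) (x :: w') = insertWord [[x]] w' := rfl
      rw [hE] at h3 h4
      obtain ⟨v, b', hg0, hg1, hlen, hdom, hCm, hvl, hvw⟩ :=
        insert_single [x] w' (by simp) h2.of_cons
      obtain ⟨hvsub, hwsub, htake⟩ := hCm 1 (by simp)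
        (fun z hz j hj hj' => by
          have hj0 : j = 0 := by omega
          subst hj0
          simpa using (List.pairwise_cons.mp h2).1 z hz)
      have hv0 : v = [] := by simpa using List.sublist_nil.mp (by simpa using hvsub)
      have hr3 : r3 = [] := by rw [← h3, hg1, hv0]
      have hr4 : r4 = b' := by rw [← h4, hg0]
      refine ⟨by rw [hr3], ?_, ?_⟩
      · have hb'd : b' = x :: b'.drop 1 := by
          conv_lhs => rw [← List.take_append_drop 1 b']
          rw [htake]
          rfl
        rw [hr4, hb'd]
        exact (by simpa using hwsub : w'.Sublist (b'.drop 1)).cons₂ x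
      · intro hne; exact absurd hr3 hne
  · simp only [rowTab, if_neg hr1] at h3 h4
    obtain ⟨v, b', hg0, hg1, hlen, hdom, hCm, hvl, hvw⟩ := insert_single r1 r2 h1 h2
    obtain ⟨hvsub, hwsub, -⟩ := hCm 0 (by simp) (fun z hz j hj hj' => by omega)
    have hr3 : r3 = v := by rw [← h3, hg1]
    have hr4 : r4 = b' := by rw [← h4, hg0]
    subst hr3; subst hr4
    refine ⟨by simpa using hvsub, by simpa using hwsub, fun _ => ⟨⟨hlen, ?_⟩, ⟨hvl, ?_⟩⟩⟩
    · intro i hu hl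
      simpa using hdom i hu hl
    · intro i hu hl
      simpa using hvw i hu hl
end

section
/- For the column braiding σ_C, any three of the four columns a1, a2, a3, a4 with σ_C(a1, a2) = (a3, a4) determine the remaining one, and the pair (a1, a2) determines (a3, a4). -/
variable {α : Type*} [LinearOrder α]

/-- Head of the bottom row. -/
def swiHd (t : List (List α)) : Option α := t.head?.bind List.head?

/-- Second entry of the bottom row. -/
def swiSec (t : List (List α)) : Option α := t.head?.bind (fun r => r[1]?)

/-- A row of a two-column tableau. -/
def SwiOkRow (r : List α) : Prop := (∃ u, r = [u]) ∨ ∃ u v, r = [u, v] ∧ u ≤ v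

/-- Domination relation between consecutive rows of a two-column tableau. -/
def SwiRel (r s : List α) : Prop :=
  (∀ u u', r.head? = some u → s.head? = some u' → u < u') ∧
  (∀ v', s[1]? = some v' → ∃ v, r[1]? = some v ∧ v < v')

/-- Invariant: a two-column tableau. -/
def SwiInv (t : List (List α)) : Prop := (∀ r ∈ t, SwiOkRow r) ∧ t.Chain' SwiRel

/-- `y` is smaller than every second-column entry of `t`. -/
def SwiCmp (y : α) (t : List (List α)) : Prop := ∀ r ∈ t, ∀ v, r[1]? = some v → y < v

lemma swiHd_tabInsert (t : List (List α)) (ht : ∀ r ∈ t, SwiOkRow r) (y u' : α)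
    (h : swiHd (tabInsert t y) = some u') : u' = y ∨ (swiHd t = some u' ∧ u' ≤ y) := by
  cases t with
  | nil =>
    simp [tabInsert, swiHd] at h
    exact Or.inl h.symm
  | cons r rest =>
    rcases ht r (by simp) with ⟨u, rfl⟩ | ⟨u, v, rfl, huv⟩
    · by_cases huy : u ≤ y
      · have : tabInsert ([u] :: rest) y = [u, y] :: rest := by
          simp [tabInsert, rowInsert, huy]
        rw [this] at h
        simp [swiHd] at h
        exact Or.inr ⟨by simp [swiHd, h], h ▸ huy⟩
      · have : tabInsert ([u] :: rest) y = [y] :: tabInsert rest u := by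
          simp [tabInsert, rowInsert, huy]
        rw [this] at h
        simp [swiHd] at h
        exact Or.inl h.symm
    · by_cases huy : u ≤ y
      · by_cases hvy : v ≤ y
        · have : tabInsert ([u, v] :: rest) y = [u, v, y] :: rest := by
            simp [tabInsert, rowInsert, huy, hvy]
          rw [this] at h
          simp [swiHd] at h
          exact Or.inr ⟨by simp [swiHd, h], h ▸ huy⟩
        · have : tabInsert ([u, v] :: rest) y = [u, y] :: tabInsert rest v := by
            simp [tabInsert, rowInsert, huy, hvy]
          rw [this] at h
          simp [swiHd] at h
          exact Or.inr ⟨by simp [swiHd, h], h ▸ huy⟩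
      · have : tabInsert ([u, v] :: rest) y = [y, v] :: tabInsert rest u := by
          simp [tabInsert, rowInsert, huy]
        rw [this] at h
        simp [swiHd] at h
        exact Or.inl h.symm

lemma swiSec_tabInsert (t : List (List α)) (ht : ∀ r ∈ t, SwiOkRow r) (y v0 : α)
    (h : swiSec (tabInsert t y) = some v0) :
    (v0 = y ∧ ∃ a, swiHd t = some a ∧ a ≤ y) ∨ swiSec t = some v0 := by
  cases t with
  | nil => simp [tabInsert, swiSec] at h
  | cons r rest =>
    rcases ht r (by simp) with ⟨u, rfl⟩ | ⟨u, v, rfl, huv⟩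
    · by_cases huy : u ≤ y
      · have : tabInsert ([u] :: rest) y = [u, y] :: rest := by
          simp [tabInsert, rowInsert, huy]
        rw [this] at h
        simp [swiSec] at h
        exact Or.inl ⟨h.symm, u, by simp [swiHd], huy⟩
      · have : tabInsert ([u] :: rest) y = [y] :: tabInsert rest u := by
          simp [tabInsert, rowInsert, huy]
        rw [this] at h
        simp [swiSec] at h
    · by_cases huy : u ≤ y
      · by_cases hvy : v ≤ y
        · have : tabInsert ([u, v] :: rest) y = [u, v, y] :: rest := by
            simp [tabInsert, rowInsert, huy, hvy]
          rw [this] at h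
          simp [swiSec] at h
          exact Or.inr (by simp [swiSec, h])
        · have : tabInsert ([u, v] :: rest) y = [u, y] :: tabInsert rest v := by
            simp [tabInsert, rowInsert, huy, hvy]
          rw [this] at h
          simp [swiSec] at h
          exact Or.inl ⟨h.symm, u, by simp [swiHd], huy⟩
      · have : tabInsert ([u, v] :: rest) y = [y, v] :: tabInsert rest u := by
          simp [tabInsert, rowInsert, huy]
        rw [this] at h
        simp [swiSec] at h
        exact Or.inr (by simp [swiSec, h])



lemma swiSec_chain : ∀ (t : List (List α)), t.Chain' SwiRel →
    ∀ s ∈ t, ∀ v2, s[1]? = some v2 → ∃ w, swiSec t = some w ∧ w ≤ v2 := by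
  intro t
  induction t with
  | nil => intro _ s hs; simp at hs
  | cons a l ih =>
    intro hc s hs v2 hv2
    rcases List.mem_cons.mp hs with rfl | hs
    · exact ⟨v2, by simpa [swiSec] using hv2, le_refl v2⟩
    · cases l with
      | nil => simp at hs
      | cons b l' =>
        obtain ⟨w', hw', hle⟩ := ih hc.tail s hs v2 hv2
        have hrel : SwiRel a b := (List.isChain_cons.mp hc).1 b (by simp)
        obtain ⟨w, hw, hlt⟩ := hrel.2 w' (by simpa [swiSec] using hw')
        exact ⟨w, by simpa [swiSec] using hw, le_of_lt (lt_of_lt_of_le hlt hle)⟩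

lemma swiCascade : ∀ (t : List (List α)) (y : α), SwiInv t → SwiCmp y t →
    SwiInv (tabInsert t y) ∧
    ∀ r ∈ tabInsert t y, ∀ v, r[1]? = some v →
      (v = y ∧ ∃ a, swiHd t = some a ∧ a ≤ y) ∨ ∃ r₀ ∈ t, r₀[1]? = some v := by
  intro t
  induction t with
  | nil =>
    intro y _ _
    refine ⟨⟨?_, ?_⟩, ?_⟩
    · intro r hr
      simp [tabInsert] at hr
      exact Or.inl ⟨y, hr⟩
    · simp [tabInsert]
      exact List.isChain_singleton _
    · intro r hr v hv
      simp [tabInsert] at hr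
      subst hr
      simp at hv
  | cons r rest ih =>
    intro y hInv hCmp
    obtain ⟨hok, hch⟩ := hInv
    have hokrest : ∀ s ∈ rest, SwiOkRow s := fun s hs => hok s (by simp [hs])
    have hchrest : rest.Chain' SwiRel := hch.tail
    have hInvRest : SwiInv rest := ⟨hokrest, hchrest⟩
    -- heads of rest dominate head of r
    have hheadrest : ∀ b ∈ rest.head?, ∀ u2, b.head? = some u2 →
        ∀ u1, r.head? = some u1 → u1 < u2 := by
      intro b hb u2 h2 u1 h1
      have hrel : SwiRel r b := (List.isChain_cons.mp hch).1 b hb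
      exact hrel.1 u1 u2 h1 h2
    rcases hok r (by simp) with ⟨u, rfl⟩ | ⟨u, v, rfl, huv⟩
    -- case r = [u]
    · -- no row of rest has a second entry
      have hnos : ∀ s ∈ rest, s[1]? = none := by
        intro s hs
        cases h2 : s[1]? with
        | none => rfl
        | some v2 =>
          exfalso
          obtain ⟨w, hw, -⟩ := swiSec_chain rest hchrest s hs v2 h2
          cases rest with
          | nil => simp at hs
          | cons b l' =>
            have hrel : SwiRel [u] b := (List.isChain_cons.mp hch).1 b (by simp)
            obtain ⟨vv, hvv, -⟩ := hrel.2 w (by simpa [swiSec] using hw)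
            simp at hvv
      by_cases huy : u ≤ y
      · have ht : tabInsert ([u] :: rest) y = [u, y] :: rest := by
          simp [tabInsert, rowInsert, huy]
        rw [ht]
        refine ⟨⟨?_, ?_⟩, ?_⟩
        · intro s hs
          rcases List.mem_cons.mp hs with rfl | hs
          · exact Or.inr ⟨u, y, rfl, huy⟩
          · exact hokrest s hs
        · unfold List.Chain'
          rw [List.isChain_cons]
          refine ⟨?_, hchrest⟩
          intro b hb
          rw [Option.mem_def] at hb
          constructor
          · intro u1 u2 h1 h2
            simp at h1
            rw [← h1]
            exact hheadrest b hb u2 h2 u rfl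
          · intro v' hv'
            exfalso
            have := hnos b (List.mem_of_mem_head? (Option.mem_def.mpr hb))
            rw [this] at hv'
            exact absurd hv' (by simp)
        · intro s hs v0 hv0
          rcases List.mem_cons.mp hs with rfl | hs
          · simp at hv0
            exact Or.inl ⟨hv0.symm, u, by simp [swiHd], huy⟩
          · exact Or.inr ⟨s, by simp [hs], hv0⟩
      · have ht : tabInsert ([u] :: rest) y = [y] :: tabInsert rest u := by
          simp [tabInsert, rowInsert, huy]
        have hCmpu : SwiCmp u rest := by
          intro s hs v2 hv2
          rw [hnos s hs] at hv2
          exact absurd hv2 (by simp)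
        obtain ⟨⟨hok', hch'⟩, hsec'⟩ := ih u hInvRest hCmpu
        rw [ht]
        refine ⟨⟨?_, ?_⟩, ?_⟩
        · intro s hs
          rcases List.mem_cons.mp hs with rfl | hs
          · exact Or.inl ⟨y, rfl⟩
          · exact hok' s hs
        · unfold List.Chain'
          rw [List.isChain_cons]
          refine ⟨?_, hch'⟩
          intro b hb
          rw [Option.mem_def] at hb
          constructor
          · intro u1 u2 h1 h2
            simp at h1
            rw [← h1]
            have hhd : swiHd (tabInsert rest u) = some u2 := by
              simp [swiHd, hb, h2]
            rcases swiHd_tabInsert rest hokrest u u2 hhd with rfl | ⟨hh, -⟩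
            · exact lt_of_not_ge huy
            · cases rest with
              | nil => simp [swiHd] at hh
              | cons c l' =>
                have : u < u2 := hheadrest c (by simp) u2 (by simpa [swiHd] using hh) u rfl
                exact lt_trans (lt_of_not_ge huy) this
          · intro v' hv'
            exfalso
            have hsb : swiSec (tabInsert rest u) = some v' := by
              simp [swiSec, hb, hv']
            rcases swiSec_tabInsert rest hokrest u v' hsb with ⟨-, a, ha, hau⟩ | hold
            · cases rest with
              | nil => simp [swiHd] at ha
              | cons c l' =>
                have : u < a := hheadrest c (by simp) a (by simpa [swiHd] using ha) u rfl
                exact absurd hau (not_le.mpr this)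
            · cases rest with
              | nil => simp [swiSec] at hold
              | cons c l' =>
                have := hnos c (by simp)
                simp [swiSec, this] at hold
        · intro s hs v0 hv0
          rcases List.mem_cons.mp hs with rfl | hs
          · simp at hv0
          · rcases hsec' s hs v0 hv0 with ⟨-, a, ha, hau⟩ | ⟨r₀, hr₀, h₀⟩
            · exfalso
              cases rest with
              | nil => simp [swiHd] at ha
              | cons c l' =>
                have : u < a := hheadrest c (by simp) a (by simpa [swiHd] using ha) u rfl
                exact absurd hau (not_le.mpr this)
            · exact Or.inr ⟨r₀, by simp [hr₀], h₀⟩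
    -- case r = [u, v]
    · have hyv : y < v := hCmp [u, v] (by simp) v (by simp)
      have hvnley : ¬ v ≤ y := not_le.mpr hyv
      have hsecrest : ∀ s ∈ rest, ∀ v2, s[1]? = some v2 → v < v2 := by
        intro s hs v2 hv2
        obtain ⟨w, hw, hle⟩ := swiSec_chain rest hchrest s hs v2 hv2
        cases rest with
        | nil => simp at hs
        | cons b l' =>
          have hrel : SwiRel [u, v] b := (List.isChain_cons.mp hch).1 b (by simp)
          obtain ⟨vv, hvv, hlt⟩ := hrel.2 w (by simpa [swiSec] using hw)
          simp at hvv
          subst hvv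
          exact lt_of_lt_of_le hlt hle
      by_cases huy : u ≤ y
      · have ht : tabInsert ([u, v] :: rest) y = [u, y] :: tabInsert rest v := by
          simp [tabInsert, rowInsert, huy, hvnley]
        have hCmpv : SwiCmp v rest := hsecrest
        obtain ⟨⟨hok', hch'⟩, hsec'⟩ := ih v hInvRest hCmpv
        rw [ht]
        refine ⟨⟨?_, ?_⟩, ?_⟩
        · intro s hs
          rcases List.mem_cons.mp hs with rfl | hs
          · exact Or.inr ⟨u, y, rfl, huy⟩
          · exact hok' s hs
        · unfold List.Chain'
          rw [List.isChain_cons]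
          refine ⟨?_, hch'⟩
          intro b hb
          rw [Option.mem_def] at hb
          constructor
          · intro u1 u2 h1 h2
            simp at h1
            rw [← h1]
            have hhd : swiHd (tabInsert rest v) = some u2 := by
              simp [swiHd, hb, h2]
            rcases swiHd_tabInsert rest hokrest v u2 hhd with rfl | ⟨hh, -⟩
            · exact lt_of_le_of_lt huy hyv
            · cases rest with
              | nil => simp [swiHd] at hh
              | cons c l' =>
                exact hheadrest c (by simp) u2 (by simpa [swiHd] using hh) u rfl
          · intro v' hv'
            have hsb : swiSec (tabInsert rest v) = some v' := by
              simp [swiSec, hb, hv']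
            refine ⟨y, by simp, ?_⟩
            rcases swiSec_tabInsert rest hokrest v v' hsb with ⟨hveq, -⟩ | hold
            · rw [hveq]; exact hyv
            · cases rest with
              | nil => simp [swiSec] at hold
              | cons c l' =>
                have : v < v' := hsecrest c (by simp) v' (by simpa [swiSec] using hold)
                exact lt_trans hyv this
        · intro s hs v0 hv0
          rcases List.mem_cons.mp hs with rfl | hs
          · simp at hv0
            exact Or.inl ⟨hv0.symm, u, by simp [swiHd], huy⟩
          · rcases hsec' s hs v0 hv0 with ⟨hveq, -⟩ | ⟨r₀, hr₀, h₀⟩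
            · exact Or.inr ⟨[u, v], by simp, by simp [hveq]⟩
            · exact Or.inr ⟨r₀, by simp [hr₀], h₀⟩
      · have ht : tabInsert ([u, v] :: rest) y = [y, v] :: tabInsert rest u := by
          simp [tabInsert, rowInsert, huy]
        have hCmpu : SwiCmp u rest := fun s hs v2 hv2 =>
          lt_of_le_of_lt huv (hsecrest s hs v2 hv2)
        obtain ⟨⟨hok', hch'⟩, hsec'⟩ := ih u hInvRest hCmpu
        rw [ht]
        refine ⟨⟨?_, ?_⟩, ?_⟩
        · intro s hs
          rcases List.mem_cons.mp hs with rfl | hs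
          · exact Or.inr ⟨y, v, rfl, le_of_lt hyv⟩
          · exact hok' s hs
        · unfold List.Chain'
          rw [List.isChain_cons]
          refine ⟨?_, hch'⟩
          intro b hb
          rw [Option.mem_def] at hb
          constructor
          · intro u1 u2 h1 h2
            simp at h1
            rw [← h1]
            have hhd : swiHd (tabInsert rest u) = some u2 := by
              simp [swiHd, hb, h2]
            rcases swiHd_tabInsert rest hokrest u u2 hhd with rfl | ⟨hh, -⟩
            · exact lt_of_not_ge huy
            · cases rest with
              | nil => simp [swiHd] at hh
              | cons c l' =>
                have : u < u2 := hheadrest c (by simp) u2 (by simpa [swiHd] using hh) u rfl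
                exact lt_trans (lt_of_not_ge huy) this
          · intro v' hv'
            have hsb : swiSec (tabInsert rest u) = some v' := by
              simp [swiSec, hb, hv']
            refine ⟨v, by simp, ?_⟩
            rcases swiSec_tabInsert rest hokrest u v' hsb with ⟨-, a, ha, hau⟩ | hold
            · exfalso
              cases rest with
              | nil => simp [swiHd] at ha
              | cons c l' =>
                have : u < a := hheadrest c (by simp) a (by simpa [swiHd] using ha) u rfl
                exact absurd hau (not_le.mpr this)
            · cases rest with
              | nil => simp [swiSec] at hold
              | cons c l' =>
                exact hsecrest c (by simp) v' (by simpa [swiSec] using hold)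
        · intro s hs v0 hv0
          rcases List.mem_cons.mp hs with rfl | hs
          · simp at hv0
            subst hv0
            exact Or.inr ⟨[u, v], by simp, by simp⟩
          · rcases hsec' s hs v0 hv0 with ⟨-, a, ha, hau⟩ | ⟨r₀, hr₀, h₀⟩
            · exfalso
              cases rest with
              | nil => simp [swiHd] at ha
              | cons c l' =>
                have : u < a := hheadrest c (by simp) a (by simpa [swiHd] using ha) u rfl
                exact absurd hau (not_le.mpr this)
            · exact Or.inr ⟨r₀, by simp [hr₀], h₀⟩



lemma swiWordInv : ∀ (w : List α) (t : List (List α)), SwiInv t → w.Pairwise (· > ·) →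
    (∀ x ∈ w, SwiCmp x t) → SwiInv (insertWord t w) := by
  intro w
  induction w with
  | nil => intro t h _ _; simpa [insertWord] using h
  | cons x w ih =>
    intro t hInv hs hc
    obtain ⟨hInv', hsec'⟩ := swiCascade t x hInv (hc x (by simp))
    have he : insertWord t (x :: w) = insertWord (tabInsert t x) w := rfl
    rw [he]
    refine ih _ hInv' (List.pairwise_cons.mp hs).2 ?_
    intro z hz s hsmem v hv
    rcases hsec' s hsmem v hv with ⟨rfl, -⟩ | ⟨r₀, hr₀, h₀⟩
    · exact (List.pairwise_cons.mp hs).1 z hz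
    · exact hc z (by simp [hz]) r₀ hr₀ v h₀

lemma swiInv_colTab (c : List α) (hc : IsCol c) : SwiInv (colTab c) := by
  constructor
  · intro r hr
    simp [colTab] at hr
    obtain ⟨x, -, rfl⟩ := hr
    exact Or.inl ⟨x, rfl⟩
  · rw [colTab]
    unfold List.Chain'
    rw [List.isChain_map]
    have h1 : List.Pairwise (· < ·) c.reverse := by
      rw [List.pairwise_reverse]
      exact hc
    refine List.IsChain.imp ?_ (List.isChain_iff_pairwise.mpr h1)
    intro a b hab
    constructor
    · intro u u' h1 h2
      simp at h1 h2
      rw [← h1, ← h2]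
      exact hab
    · intro v' hv'
      simp at hv'

lemma swiCmp_colTab (x : α) (c : List α) : SwiCmp x (colTab c) := by
  intro r hr v hv
  simp [colTab] at hr
  obtain ⟨a, -, rfl⟩ := hr
  simp at hv

omit [LinearOrder α] in
lemma flatten_map_singleton (l : List α) : (l.map (fun x => [x])).flatten = l := by
  induction l with
  | nil => simp
  | cons a l ih => simp [ih]

omit [LinearOrder α] in
lemma rowRead_colTab (c : List α) : rowRead (colTab c) = c := by
  rw [rowRead, colTab, ← List.map_reverse, List.reverse_reverse, flatten_map_singleton]

lemma rowInsert_perm : ∀ (r : List α) (x : α),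
    ((rowInsert r x).1 ++ (rowInsert r x).2.toList).Perm (x :: r) := by
  intro r
  induction r with
  | nil => intro x; simp [rowInsert]
  | cons y r ih =>
    intro x
    by_cases h : y ≤ x
    · simp only [rowInsert, if_pos h]
      exact ((ih x).cons y).trans (List.Perm.swap x y r)
    · simp only [rowInsert, if_neg h, Option.toList_some]
      exact (List.perm_append_comm.trans (List.Perm.refl _)).cons x

lemma tabInsert_perm : ∀ (t : List (List α)) (x : α),
    (tabInsert t x).flatten.Perm (x :: t.flatten) := by
  intro t
  induction t with
  | nil => intro x; simp [tabInsert]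
  | cons r t ih =>
    intro x
    cases h : rowInsert r x with
    | mk r' o =>
      cases o with
      | none =>
        have hp := rowInsert_perm r x
        rw [h] at hp
        simp only [Option.toList_none, List.append_nil] at hp
        have ht : tabInsert (r :: t) x = r' :: t := by simp [tabInsert, h]
        rw [ht, List.flatten_cons, List.flatten_cons]
        exact hp.append_right t.flatten
      | some b =>
        have hp := rowInsert_perm r x
        rw [h] at hp
        have ht : tabInsert (r :: t) x = r' :: tabInsert t b := by simp [tabInsert, h]
        rw [ht, List.flatten_cons, List.flatten_cons]
        refine ((ih b).append_left r').trans ?_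
        have : r' ++ b :: t.flatten = (r' ++ [b]) ++ t.flatten := by simp
        rw [this]
        exact hp.append_right t.flatten

lemma insertWord_perm : ∀ (w : List α) (t : List (List α)),
    (insertWord t w).flatten.Perm (t.flatten ++ w) := by
  intro w
  induction w with
  | nil => intro t; simp [insertWord]
  | cons x w ih =>
    intro t
    have he : insertWord t (x :: w) = insertWord (tabInsert t x) w := rfl
    rw [he]
    refine (ih _).trans ?_
    refine (((tabInsert_perm t x).append_right w).trans ?_)
    exact List.perm_middle.symm

lemma swiCover : ∀ (s : List (List α)), (∀ r ∈ s, SwiOkRow r) →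
    (s.filterMap (fun r => r[0]?) ++ s.filterMap (fun r => r[1]?)).Perm s.flatten := by
  intro s
  induction s with
  | nil => simp
  | cons r s ih =>
    intro h
    have ihs := ih (fun a ha => h a (by simp [ha]))
    rcases h r (by simp) with ⟨u, rfl⟩ | ⟨u, v, rfl, -⟩
    · simp only [List.filterMap_cons, List.flatten_cons]
      simp only [List.getElem?_cons_zero, List.getElem?_cons_succ, List.getElem?_nil]
      exact ihs.cons u
    · simp only [List.filterMap_cons, List.flatten_cons]
      simp only [List.getElem?_cons_zero, List.getElem?_cons_succ, List.getElem?_nil]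
      show (u :: (s.filterMap (fun r => r[0]?) ++ v :: s.filterMap (fun r => r[1]?))).Perm
        (u :: v :: s.flatten)
      refine List.Perm.cons u (List.perm_middle.trans ?_)
      exact ihs.cons v

omit [LinearOrder α] in
lemma flatten_reverse_perm : ∀ (s : List (List α)), s.reverse.flatten.Perm s.flatten := by
  intro s
  induction s with
  | nil => simp
  | cons r s ih =>
    simp only [List.reverse_cons, List.flatten_append, List.flatten_cons]
    refine ((ih.append_right _).trans ?_)
    simp only [List.flatten_cons, List.flatten_nil, List.append_nil]
    exact List.perm_append_comm

lemma sigmaC_perm (c1 c2 : List α) (h1 : IsCol c1) (h2 : IsCol c2) :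
    ((sigmaC c1 c2).1 ++ (sigmaC c1 c2).2).Perm (c1 ++ c2) := by
  have hTe : tabProd (colTab c1) (colTab c2) = insertWord (colTab c1) c2 := by
    rw [tabProd, rowRead_colTab]
  have hInvT : SwiInv (tabProd (colTab c1) (colTab c2)) := by
    rw [hTe]
    exact swiWordInv c2 (colTab c1) (swiInv_colTab c1 h1) h2 (fun x _ => swiCmp_colTab x c1)
  have hcov := swiCover (tabProd (colTab c1) (colTab c2)).reverse
    (fun r hr => hInvT.1 r (List.mem_reverse.mp hr))
  have hflat : (tabProd (colTab c1) (colTab c2)).flatten.Perm (c1 ++ c2) := by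
    rw [hTe]
    refine (insertWord_perm c2 (colTab c1)).trans ?_
    have : (colTab c1).flatten = c1.reverse := flatten_map_singleton c1.reverse
    rw [this]
    exact (c1.reverse_perm).append_right c2
  show (colOf (tabProd (colTab c1) (colTab c2)) 0 ++
      colOf (tabProd (colTab c1) (colTab c2)) 1).Perm (c1 ++ c2)
  rw [colOf, colOf]
  exact hcov.trans ((flatten_reverse_perm _).trans hflat)


/-- Weak invertibility of the column braiding: with `σ_C (a₁, a₂) = (a₃, a₄)`,
any three of the four columns determine the remaining one (the pair `(a₁,a₂)`
determining `(a₃,a₄)` since `σ_C` is a map). -/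
theorem sigmaC_weak_invertibility (a1 a2 b1 b2 : List α)
    (ha1 : IsCol a1) (ha2 : IsCol a2) (hb1 : IsCol b1) (hb2 : IsCol b2)
    (h : sigmaC a1 a2 = sigmaC b1 b2) :
    (a1 = b1 → a2 = b2) ∧ (a2 = b2 → a1 = b1) := by
  have hp : (a1 ++ a2).Perm (b1 ++ b2) := by
    have h1 := sigmaC_perm a1 a2 ha1 ha2
    rw [h] at h1
    exact h1.symm.trans (sigmaC_perm b1 b2 hb1 hb2)
  haveI : IsAntisymm α (· > ·) := ⟨fun a b h1 h2 => absurd h1 (lt_asymm h2)⟩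
  constructor
  · rintro rfl
    exact List.Perm.eq_of_pairwise (fun _ _ _ _ h1 h2 => absurd h1 (lt_asymm h2)) ha2 hb2 ((List.perm_append_left_iff a1).mp hp)
  · rintro rfl
    exact List.Perm.eq_of_pairwise (fun _ _ _ _ h1 h2 => absurd h1 (lt_asymm h2)) ha1 hb1 ((List.perm_append_right_iff a2).mp hp)
end

section
/- For any two Young tableaux T1, T2 on a totally ordered alphabet A, the number of rows of T1 * T2 is at most the number of rows of T1 plus the number of rows of T2, and the number of columns of T1 * T2 is at most the number of columns of T1 plus the number of columns of T2. -/
variable {α : Type*} [LinearOrder α]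

lemma rowInsert_none : ∀ (r : List α) (x : α), (rowInsert r x).2 = none →
    (rowInsert r x).1 = r ++ [x] ∧ ∀ a ∈ r, a ≤ x
  | [], x, _ => by simp [rowInsert]
  | y :: r, x, h => by
    by_cases hyx : y ≤ x
    · simp only [rowInsert, if_pos hyx] at h ⊢
      obtain ⟨h1, h2⟩ := rowInsert_none r x h
      refine ⟨by simp [h1], ?_⟩
      intro a ha
      rcases List.mem_cons.1 ha with rfl | ha
      · exact hyx
      · exact h2 a ha
    · simp [rowInsert, if_neg hyx] at h

lemma rowInsert_some : ∀ (r : List α) (x y : α), (rowInsert r x).2 = some y →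
    ∃ p, ∃ hp : p < r.length, (rowInsert r x).1 = r.set p x ∧ y = r[p] ∧
      (∀ i (hi : i < r.length), i < p → r[i] ≤ x) ∧ x < y
  | [], x, y, h => by simp [rowInsert] at h
  | a :: r, x, y, h => by
    by_cases hax : a ≤ x
    · simp only [rowInsert, if_pos hax] at h ⊢
      obtain ⟨p, hp, h1, h2, h3, h4⟩ := rowInsert_some r x y h
      refine ⟨p + 1, by simpa using Nat.succ_lt_succ hp, by simp [h1], by simpa using h2, ?_, h4⟩
      intro i hi hip
      cases i with
      | zero => simpa using hax
      | succ i =>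
        have := h3 i (by simpa using hi) (Nat.lt_of_succ_lt_succ hip)
        simpa using this
    · simp only [rowInsert, if_neg hax] at h ⊢
      obtain rfl : a = y := by simpa using h
      exact ⟨0, by simp, by simp, by simp, by omega, lt_of_not_ge hax⟩

lemma sorted_set_of (r : List α) (x : α) (p : ℕ) (hp : p < r.length)
    (hr : r.Pairwise (· ≤ ·)) (hlo : ∀ i (hi : i < r.length), i < p → r[i] ≤ x)
    (hhi : x ≤ r[p]) : (r.set p x).Pairwise (· ≤ ·) := by
  have hr' : ∀ i j (hi : i < r.length) (hj : j < r.length), i ≤ j → r[i] ≤ r[j] := by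
    intro i j hi hj hij
    rcases eq_or_lt_of_le hij with rfl | hij
    · exact le_refl _
    · simpa using List.pairwise_iff_get.1 hr ⟨i, hi⟩ ⟨j, hj⟩ hij
  rw [List.pairwise_iff_get]
  intro i j hij
  have hi := i.2; have hj := j.2
  simp only [List.length_set] at hi hj
  have hij' : (i : ℕ) < (j : ℕ) := hij
  simp only [List.get_eq_getElem, List.getElem_set]
  split_ifs with h1 h2 h2
  · exact le_refl _
  · exact le_trans hhi (hr' p j hp hj (by omega))
  · exact hlo i hi (by omega)
  · exact hr' i j hi hj (le_of_lt hij')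

lemma rowInsert_fst_sorted (r : List α) (x : α) (hr : r.Pairwise (· ≤ ·)) :
    (rowInsert r x).1.Pairwise (· ≤ ·) := by
  rcases h : (rowInsert r x).2 with _ | y
  · obtain ⟨h1, h2⟩ := rowInsert_none r x h
    rw [h1, List.pairwise_append]
    exact ⟨hr, by simp, by simpa using h2⟩
  · obtain ⟨p, hp, h1, h2, h3, h4⟩ := rowInsert_some r x y h
    rw [h1]
    exact sorted_set_of r x p hp hr h3 (le_of_lt (h2 ▸ h4))

lemma rowInsert_mem (r : List α) (x : α) (b : α) (hb : b ∈ (rowInsert r x).1) :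
    b = x ∨ b ∈ r := by
  rcases h : (rowInsert r x).2 with _ | y
  · obtain ⟨h1, -⟩ := rowInsert_none r x h
    rw [h1] at hb
    rcases List.mem_append.1 hb with hb | hb
    · exact Or.inr hb
    · exact Or.inl (by simpa using hb)
  · obtain ⟨p, hp, h1, -, -, -⟩ := rowInsert_some r x y h
    rw [h1] at hb
    rcases List.mem_or_eq_of_mem_set hb with hb | rfl
    · exact Or.inr hb
    · exact Or.inl rfl

lemma rowInsert_min (r : List α) (x y : α) (hr : r.Pairwise (· ≤ ·))
    (h : (rowInsert r x).2 = some y) : y ∈ r ∧ x < y ∧ ∀ a ∈ r, x < a → y ≤ a := by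
  obtain ⟨p, hp, h1, h2, h3, h4⟩ := rowInsert_some r x y h
  refine ⟨h2 ▸ List.getElem_mem hp, h4, ?_⟩
  intro a ha hxa
  obtain ⟨i, hi, rfl⟩ := List.mem_iff_getElem.1 ha
  rcases Nat.lt_or_ge i p with hip | hip
  · exact absurd (h3 i hi hip) (not_le.2 hxa)
  · have := List.pairwise_iff_get.1 hr
    rcases eq_or_lt_of_le hip with rfl | hlt
    · exact le_of_eq h2
    · have := this ⟨p, hp⟩ ⟨i, hi⟩ hlt
      simpa [h2] using this

def rowInsertWord : List α → List α → List α × List α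
  | r, [] => (r, [])
  | r, x :: w =>
    let q := rowInsertWord (rowInsert r x).1 w
    (q.1, (rowInsert r x).2.toList ++ q.2)

lemma insertWord_cons : ∀ (w : List α) (r : List α) (t : List (List α)),
    insertWord (r :: t) w = (rowInsertWord r w).1 :: insertWord t (rowInsertWord r w).2
  | [], r, t => by simp [insertWord, rowInsertWord]
  | x :: w, r, t => by
    have hfold : insertWord (r :: t) (x :: w) = insertWord (tabInsert (r :: t) x) w := rfl
    rcases ho : (rowInsert r x).2 with _ | y
    · have htab : tabInsert (r :: t) x = (rowInsert r x).1 :: t := by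
        rw [tabInsert]
        rcases hro : rowInsert r x with ⟨r', o⟩
        rw [hro] at ho; cases ho
        rfl
      rw [hfold, htab, insertWord_cons w]
      simp [rowInsertWord, ho]
    · have htab : tabInsert (r :: t) x = (rowInsert r x).1 :: tabInsert t y := by
        rw [tabInsert]
        rcases hro : rowInsert r x with ⟨r', o⟩
        rw [hro] at ho; cases ho
        rfl
      rw [hfold, htab, insertWord_cons w]
      have : insertWord (tabInsert t y) (rowInsertWord (rowInsert r x).1 w).2
          = insertWord t (y :: (rowInsertWord (rowInsert r x).1 w).2) := rfl
      rw [this]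
      simp [rowInsertWord, ho]

lemma rowInsertWord_spec : ∀ (w r : List α), r.Pairwise (· ≤ ·) → w.Pairwise (· ≤ ·) →
    (rowInsertWord r w).1.Pairwise (· ≤ ·) ∧ (rowInsertWord r w).2.Pairwise (· ≤ ·) ∧
      ∀ b ∈ (rowInsertWord r w).2, b ∈ r ∧ ∃ x ∈ w, x < b
  | [], r, hr, _ => by simp [rowInsertWord, hr]
  | x :: w, r, hr, hw => by
    obtain ⟨hxw, hw'⟩ := List.pairwise_cons.1 hw
    have hr' : (rowInsert r x).1.Pairwise (· ≤ ·) := rowInsert_fst_sorted r x hr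
    obtain ⟨ih1, ih2, ih3⟩ := rowInsertWord_spec w (rowInsert r x).1 hr' hw'
    have hmem : ∀ b ∈ (rowInsertWord (rowInsert r x).1 w).2, b ∈ r ∧ ∃ x' ∈ w, x' < b := by
      intro b hb
      obtain ⟨hbr', hx', hx'w, hx'b⟩ := ih3 b hb
      have hbr : b ∈ r := by
        rcases rowInsert_mem r x b hbr' with rfl | hbr
        · exact absurd hx'b (not_lt.2 (hxw _ hx'w))
        · exact hbr
      exact ⟨hbr, hx', hx'w, hx'b⟩
    rcases ho : (rowInsert r x).2 with _ | y
    · refine ⟨by simpa [rowInsertWord] using ih1, by simpa [rowInsertWord, ho] using ih2, ?_⟩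
      intro b hb
      simp only [rowInsertWord, ho, Option.toList_none, List.nil_append] at hb
      obtain ⟨hbr, hx', hx'w, hx'b⟩ := hmem b hb
      exact ⟨hbr, hx', List.mem_cons_of_mem x hx'w, hx'b⟩
    · obtain ⟨hy_mem, hxy, hmin⟩ := rowInsert_min r x y hr ho
      have hkey : ∀ b ∈ (rowInsertWord (rowInsert r x).1 w).2, y ≤ b := by
        intro b hb
        obtain ⟨hbr, hx', hx'w, hx'b⟩ := hmem b hb
        exact hmin b hbr (lt_of_le_of_lt (hxw _ hx'w) hx'b)
      refine ⟨by simpa [rowInsertWord] using ih1, ?_, ?_⟩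
      · simp only [rowInsertWord, ho, Option.toList_some, List.singleton_append]
        exact List.pairwise_cons.2 ⟨hkey, ih2⟩
      · intro b hb
        simp only [rowInsertWord, ho, Option.toList_some, List.singleton_append,
          List.mem_cons] at hb
        rcases hb with rfl | hb
        · exact ⟨hy_mem, x, List.mem_cons_self, hxy⟩
        · obtain ⟨hbr, hx', hx'w, hx'b⟩ := hmem b hb
          exact ⟨hbr, hx', List.mem_cons_of_mem x hx'w, hx'b⟩

lemma insertWord_sorted_bound : ∀ (t : List (List α)), ∀ (u : List α),
    (∀ r ∈ t, r.Pairwise (· ≤ ·)) → u.Pairwise (· ≤ ·) →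
    (insertWord t u).length ≤ t.length + 1 ∧ ∀ r ∈ insertWord t u, r.Pairwise (· ≤ ·) := by
  intro t
  induction t with
  | nil =>
    intro u _ hu
    cases u with
    | nil => simp [insertWord]
    | cons x u' =>
      have heq : insertWord ([] : List (List α)) (x :: u') = insertWord [[]] (x :: u') := rfl
      rw [heq, insertWord_cons]
      obtain ⟨hs1, hs2, hs3⟩ := rowInsertWord_spec (x :: u') ([] : List α) (by simp) hu
      have hnil : (rowInsertWord ([] : List α) (x :: u')).2 = [] := by
        rw [List.eq_nil_iff_forall_not_mem]
        intro b hb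
        exact absurd (hs3 b hb).1 (List.not_mem_nil)
      rw [hnil]
      constructor
      · simp [insertWord]
      · intro r hr
        simp only [insertWord, List.foldl_nil, List.mem_singleton] at hr
        subst hr; exact hs1
  | cons r0 t' ih =>
    intro u hrows hu
    rw [insertWord_cons]
    obtain ⟨hs1, hs2, _⟩ := rowInsertWord_spec u r0 (hrows r0 (List.mem_cons_self)) hu
    obtain ⟨ih1, ih2⟩ := ih (rowInsertWord r0 u).2
      (fun r hr => hrows r (List.mem_cons_of_mem _ hr)) hs2
    constructor
    · simpa using Nat.succ_le_succ ih1
    · intro r hr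
      rcases List.mem_cons.1 hr with rfl | hr
      · exact hs1
      · exact ih2 r hr

lemma insertWord_flatten_bound : ∀ (L : List (List α)) (t : List (List α)),
    (∀ r ∈ t, r.Pairwise (· ≤ ·)) → (∀ r ∈ L, r.Pairwise (· ≤ ·)) →
    (insertWord t L.flatten).length ≤ t.length + L.length
  | [], t, _, _ => by simp [insertWord]
  | u :: L', t, ht, hL => by
    have hsplit : insertWord t (u :: L').flatten = insertWord (insertWord t u) L'.flatten := by
      rw [List.flatten_cons, insertWord, insertWord, insertWord, List.foldl_append]
    rw [hsplit]
    obtain ⟨h1, h2⟩ := insertWord_sorted_bound t u ht (hL u (List.mem_cons_self))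
    have := insertWord_flatten_bound L' (insertWord t u) h2
      (fun r hr => hL r (List.mem_cons_of_mem _ hr))
    calc (insertWord (insertWord t u) L'.flatten).length
        ≤ (insertWord t u).length + L'.length := this
      _ ≤ (t.length + 1) + L'.length := by omega
      _ = t.length + (u :: L').length := by simp; omega

def InvB (ρ v : List α) : Prop :=
  ∀ j (hj : j < ρ.length), ∃ s c, (s ++ [c]).Sublist v ∧ (s ++ [c]).Pairwise (· ≤ ·) ∧
    s.length = j ∧ c ≤ ρ[j]

lemma sorted_concat_ub {s : List α} {c : α} (h : (s ++ [c]).Pairwise (· ≤ ·)) :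
    ∀ a ∈ s ++ [c], a ≤ c := by
  intro a ha
  rcases List.mem_append.1 ha with ha | ha
  · exact (List.pairwise_append.1 h).2.2 a ha c (List.mem_singleton_self c)
  · exact le_of_eq (List.mem_singleton.1 ha)

lemma inv_rowInsert (ρ v : List α) (x : α) (h : InvB ρ v) :
    InvB (rowInsert ρ x).1 (v ++ [x]) := by
  have hext : ∀ s c, (s ++ [c]).Sublist v → (s ++ [c]).Pairwise (· ≤ ·) → c ≤ x →
      ((s ++ [c]) ++ [x]).Sublist (v ++ [x]) ∧ ((s ++ [c]) ++ [x]).Pairwise (· ≤ ·) := by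
    intro s c hsub hsort hcx
    refine ⟨List.Sublist.append hsub (List.Sublist.refl _), ?_⟩
    rw [List.pairwise_append]
    refine ⟨hsort, by simp, ?_⟩
    intro a ha b hb
    rw [List.mem_singleton] at hb; subst hb
    exact le_trans (sorted_concat_ub hsort a ha) hcx
  rcases ho : (rowInsert ρ x).2 with _ | y
  · obtain ⟨h1, h2⟩ := rowInsert_none ρ x ho
    rw [h1]
    intro j hj
    rw [List.length_append, List.length_singleton] at hj
    rcases Nat.lt_or_ge j ρ.length with hjl | hjl
    · obtain ⟨s, c, hsub, hsort, hlen, hc⟩ := h j hjl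
      exact ⟨s, c, hsub.trans (List.sublist_append_left v [x]), hsort, hlen,
        by rwa [List.getElem_append_left hjl]⟩
    · have hj' : j = ρ.length := by omega
      subst hj'
      have hval : (ρ ++ [x])[ρ.length] = x := by
        rw [List.getElem_append_right (le_refl _)]
        simp
      rcases List.eq_nil_or_concat ρ with rfl | ⟨ρ₀, z, hρ⟩
      · exact ⟨[], x, by simpa using List.sublist_append_right v [x], by simp,
          by simp, by rw [hval]⟩
      · have hlen0 : 0 < ρ.length := by rw [hρ]; simp
        obtain ⟨s, c, hsub, hsort, hlen, hc⟩ := h (ρ.length - 1) (by omega)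
        have hcx : c ≤ x := le_trans hc (h2 _ (List.getElem_mem _))
        obtain ⟨hsub', hsort'⟩ := hext s c hsub hsort hcx
        exact ⟨s ++ [c], x, hsub', hsort', by simp [hlen]; omega, by rw [hval]⟩
  · obtain ⟨p, hp, h1, h2, h3, h4⟩ := rowInsert_some ρ x y ho
    rw [h1]
    intro j hj
    rw [List.length_set] at hj
    by_cases hjp : j = p
    · subst hjp
      have hval : (ρ.set j x)[j]'(by rwa [List.length_set]) = x := by
        rw [List.getElem_set, if_pos rfl]
      rcases Nat.eq_zero_or_pos j with rfl | hpos
      · exact ⟨[], x, by simpa using List.sublist_append_right v [x], by simp, by simp,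
          by rw [hval]⟩
      · obtain ⟨s, c, hsub, hsort, hlen, hc⟩ := h (j - 1) (by omega)
        have hcx : c ≤ x := le_trans hc (h3 (j - 1) (by omega) (by omega))
        obtain ⟨hsub', hsort'⟩ := hext s c hsub hsort hcx
        exact ⟨s ++ [c], x, hsub', hsort', by simp [hlen]; omega, by rw [hval]⟩
    · obtain ⟨s, c, hsub, hsort, hlen, hc⟩ := h j hj
      refine ⟨s, c, hsub.trans (List.sublist_append_left v [x]), hsort, hlen, ?_⟩
      rwa [List.getElem_set, if_neg (fun hh => hjp hh.symm)]

lemma inv_rowInsertWord : ∀ (w ρ v : List α), InvB ρ v →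
    InvB (rowInsertWord ρ w).1 (v ++ w)
  | [], ρ, v, h => by simpa [rowInsertWord] using h
  | x :: w, ρ, v, h => by
    have h' := inv_rowInsert ρ v x h
    have := inv_rowInsertWord w (rowInsert ρ x).1 (v ++ [x]) h'
    have heq : (rowInsertWord ρ (x :: w)).1 = (rowInsertWord (rowInsert ρ x).1 w).1 := by
      simp [rowInsertWord]
    rw [heq]
    simpa [List.append_assoc] using this

lemma inv_self (r : List α) (hr : r.Pairwise (· ≤ ·)) : InvB r r := by
  intro j hj
  refine ⟨r.take j, r[j], ?_, ?_, by simp [List.length_take]; omega, le_refl _⟩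
  · rw [List.take_concat_get']
    exact List.take_sublist _ _
  · rw [List.take_concat_get']
    exact List.Pairwise.sublist (List.take_sublist _ _) hr

lemma rowRead_cons (b : List α) (rest : List (List α)) :
    rowRead (b :: rest) = rowRead rest ++ b := by
  simp [rowRead]

lemma filter_count_lt : ∀ (m b : List α), m.Pairwise (· ≤ ·) → m.length ≤ b.length →
    (∀ i (hm : i < m.length) (hb : i < b.length), b[i] < m[i]) → ∀ a : α,
    (m.filter (· ≤ a)).length ≤ (b.filter (· < a)).length
  | [], b, _, _, _, a => by simp
  | x :: m, [], _, hlen, _, a => by simp at hlen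
  | x :: m, y :: b, hm, hlen, hdom, a => by
    have hyx : y < x := hdom 0 (by simp) (by simp)
    have hdom' : ∀ i (hm2 : i < m.length) (hb2 : i < b.length), b[i] < m[i] := by
      intro i hm2 hb2
      have := hdom (i + 1) (by simp; omega) (by simp; omega)
      simpa using this
    by_cases hxa : x ≤ a
    · have hya : y < a := lt_of_lt_of_le hyx hxa
      have ih := filter_count_lt m b (List.pairwise_cons.1 hm).2 (by simpa using hlen) hdom' a
      simp only [List.filter_cons, decide_eq_true_eq, hxa, hya, if_pos, List.length_cons]
      simpa using Nat.succ_le_succ ih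
    · have hnil : (x :: m).filter (· ≤ a) = [] := by
        rw [List.filter_eq_nil_iff]
        intro z hz
        rcases List.mem_cons.1 hz with rfl | hz
        · simpa using hxa
        · have := (List.pairwise_cons.1 hm).1 z hz
          simp only [decide_eq_true_eq]
          intro hza
          exact hxa (le_trans this hza)
      simp [hnil]

lemma filter_count_le : ∀ (m b : List α), m.Pairwise (· ≤ ·) → m.length ≤ b.length →
    (∀ i (hm : i < m.length) (hb : i < b.length), b[i] < m[i]) → ∀ a : α,
    (m.filter (· ≤ a)).length ≤ (b.filter (· ≤ a)).length
  | [], b, _, _, _, a => by simp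
  | x :: m, [], _, hlen, _, a => by simp at hlen
  | x :: m, y :: b, hm, hlen, hdom, a => by
    have hyx : y < x := hdom 0 (by simp) (by simp)
    have hdom' : ∀ i (hm2 : i < m.length) (hb2 : i < b.length), b[i] < m[i] := by
      intro i hm2 hb2
      have := hdom (i + 1) (by simp; omega) (by simp; omega)
      simpa using this
    by_cases hxa : x ≤ a
    · have hya : y ≤ a := le_of_lt (lt_of_lt_of_le hyx hxa)
      have ih := filter_count_le m b (List.pairwise_cons.1 hm).2 (by simpa using hlen) hdom' a
      simp only [List.filter_cons, decide_eq_true_eq, hxa, hya, if_pos, List.length_cons]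
      simpa using Nat.succ_le_succ ih
    · have hnil : (x :: m).filter (· ≤ a) = [] := by
        rw [List.filter_eq_nil_iff]
        intro z hz
        rcases List.mem_cons.1 hz with rfl | hz
        · simpa using hxa
        · have := (List.pairwise_cons.1 hm).1 z hz
          simp only [decide_eq_true_eq]
          intro hza
          exact hxa (le_trans this hza)
      simp [hnil]

lemma length_filter_split (b : List α) (a' a : α) (h : a' ≤ a) :
    (b.filter (· ≤ a)).length = (b.filter (· < a')).length +
      (b.filter (fun y => a' ≤ y ∧ y ≤ a)).length := by
  induction b with
  | nil => simp
  | cons y b ih =>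
    by_cases h1 : y < a'
    · have h2 : y ≤ a := le_trans (le_of_lt h1) h
      have h3 : ¬ a' ≤ y := not_le.2 h1
      simp [List.filter_cons, h1, h2, h3] at ih ⊢
      omega
    · by_cases h2 : y ≤ a
      · have h3 : a' ≤ y := not_lt.1 h1
        simp [List.filter_cons, h1, h2, h3] at ih ⊢
        omega
      · have h3 : ¬ y < a' := fun hc => h2 (le_trans (le_of_lt hc) h)
        simp [List.filter_cons, h1, h2, h3] at ih ⊢
        omega

lemma sorted_sublist_bound : ∀ (t : List (List α)),
    (∀ r ∈ t, r.Pairwise (· ≤ ·)) → List.Chain' (fun low up => RowDom up low) t →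
    ∀ (s : List α) (a : α), (s ++ [a]).Pairwise (· ≤ ·) → (s ++ [a]).Sublist (rowRead t) →
    s.length + 1 ≤ ((t.headD []).filter (· ≤ a)).length
  | [], _, _, s, a, _, hsub => by
    rw [show rowRead ([] : List (List α)) = [] from rfl, List.sublist_nil] at hsub
    simp at hsub
  | b :: rest, hrows, hch, s, a, hsort, hsub => by
    rw [rowRead_cons] at hsub
    obtain ⟨u, v, hw, hu, hv⟩ := List.sublist_append_iff.1 hsub
    rcases List.eq_nil_or_concat v with rfl | ⟨v₀, a2, rfl⟩
    · -- v = [] : everything sits in the rows above the bottom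
      rw [List.append_nil] at hw
      subst hw
      cases rest with
      | nil =>
        rw [show rowRead ([] : List (List α)) = [] from rfl, List.sublist_nil] at hu
        simp at hu
      | cons m rest' =>
        have hdom : RowDom m b := (List.isChain_cons_cons.1 hch).1
        have ihb := sorted_sublist_bound (m :: rest')
          (fun r hr => hrows r (List.mem_cons_of_mem _ hr)) (List.isChain_cons_cons.1 hch).2
          s a hsort hu
        have hmono := filter_count_le m b (hrows m (by simp)) hdom.1
          (fun i him hib => by simpa using hdom.2 i him hib) a
        simp only [List.headD_cons] at ihb ⊢
        omega
    · rw [List.concat_eq_append] at hw hv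
      have hw' : s ++ [a] = (u ++ v₀) ++ [a2] := by rw [hw, List.append_assoc]
      obtain ⟨hs_eq, ha_eq⟩ := List.append_inj' hw' (by simp)
      have ha2 : a2 = a := by simpa using ha_eq.symm
      rw [ha2] at hv
      rcases List.eq_nil_or_concat u with rfl | ⟨u₀, a', rfl⟩
      · -- everything inside the bottom row
        obtain rfl : s = v₀ := by simpa using hs_eq
        have hall : ∀ y ∈ s ++ [a], decide (y ≤ a) = true := by
          intro y hy
          simpa using sorted_concat_ub hsort y hy
        have hfil : (s ++ [a]).filter (· ≤ a) = s ++ [a] := List.filter_eq_self.2 hall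
        have hlen := (hv.filter (· ≤ a)).length_le
        rw [hfil] at hlen
        simpa using hlen
      · rw [List.concat_eq_append] at hu hs_eq
        cases rest with
        | nil =>
          rw [show rowRead ([] : List (List α)) = [] from rfl, List.sublist_nil] at hu
          simp at hu
        | cons m rest' =>
          have hdom : RowDom m b := (List.isChain_cons_cons.1 hch).1
          have hsort' : ((u₀ ++ [a']) ++ (v₀ ++ [a])).Pairwise (· ≤ ·) := by
            have : s ++ [a] = (u₀ ++ [a']) ++ (v₀ ++ [a]) := by
              rw [hs_eq, List.append_assoc]
            rwa [this] at hsort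
          have husort : (u₀ ++ [a']).Pairwise (· ≤ ·) :=
            List.Pairwise.sublist (List.sublist_append_left _ _) hsort'
          have ihb := sorted_sublist_bound (m :: rest')
            (fun r hr => hrows r (List.mem_cons_of_mem _ hr)) (List.isChain_cons_cons.1 hch).2
            u₀ a' husort hu
          have hE := filter_count_lt m b (hrows m (by simp)) hdom.1
            (fun i him hib => by simpa using hdom.2 i him hib) a'
          have hcross := (List.pairwise_append.1 hsort').2.2
          have ha'a : a' ≤ a := hcross a' (by simp) a (by simp)
          have hsplit := length_filter_split b a' a ha'a
          have hvall : ∀ y ∈ v₀ ++ [a], decide (a' ≤ y ∧ y ≤ a) = true := by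
            intro y hy
            have h1 : a' ≤ y := hcross a' (by simp) y hy
            have h2 : y ≤ a := sorted_concat_ub
              (List.Pairwise.sublist (List.sublist_append_right _ _) hsort') y hy
            simp [h1, h2]
          have hvfil : (v₀ ++ [a]).filter (fun y => a' ≤ y ∧ y ≤ a) = v₀ ++ [a] :=
            List.filter_eq_self.2 hvall
          have hvlen := (hv.filter (fun y => a' ≤ y ∧ y ≤ a)).length_le
          rw [hvfil] at hvlen
          have hslen : s.length = u₀.length + 1 + v₀.length := by
            rw [hs_eq]; simp; omega
          simp only [List.headD_cons] at ihb ⊢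
          simp only [List.length_append, List.length_singleton] at hvlen
          omega

lemma sorted_sublist_cols (t : List (List α)) (h : IsTableau t) (s : List α)
    (hs : s.Pairwise (· ≤ ·)) (hsub : s.Sublist (rowRead t)) : s.length ≤ cols t := by
  rcases List.eq_nil_or_concat s with rfl | ⟨s₀, a, rfl⟩
  · simp
  · rw [List.concat_eq_append] at hs hsub ⊢
    have hb := sorted_sublist_bound t (fun r hr => (h.1 r hr).2) h.2 s₀ a hs hsub
    calc (s₀ ++ [a]).length = s₀.length + 1 := by simp
      _ ≤ ((t.headD []).filter (· ≤ a)).length := hb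
      _ ≤ (t.headD []).length := List.length_filter_le _ _
      _ = cols t := rfl

/-- Subadditivity of the number of rows and of the number of columns with
respect to the plactic product of Young tableaux. -/
theorem rows_cols_subadditive (t1 t2 : List (List α))
    (h1 : IsTableau t1) (h2 : IsTableau t2) :
    (tabProd t1 t2).length ≤ t1.length + t2.length ∧
      cols (tabProd t1 t2) ≤ cols t1 + cols t2 := by
  constructor
  · have := insertWord_flatten_bound t2.reverse t1 (fun r hr => (h1.1 r hr).2)
      (fun r hr => (h2.1 r (List.mem_reverse.1 hr)).2)
    simpa [tabProd, rowRead] using this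
  · cases t1 with
    | nil =>
      cases hw : rowRead t2 with
      | nil => simp [tabProd, hw, insertWord, cols]
      | cons x w' =>
        have heq : tabProd [] t2 = insertWord [[]] (x :: w') := by rw [tabProd, hw]; rfl
        rw [heq, insertWord_cons]
        have hinv : InvB (rowInsertWord ([] : List α) (x :: w')).1 ([] ++ (x :: w')) :=
          inv_rowInsertWord _ _ _ (by intro j hj; simp at hj)
        simp only [List.nil_append] at hinv
        rcases Nat.eq_zero_or_pos (rowInsertWord ([] : List α) (x :: w')).1.length
          with h0 | hpos
        · simp [cols, h0]
        · obtain ⟨s, c, hsub, hsort, hlen, -⟩ :=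
            hinv ((rowInsertWord ([] : List α) (x :: w')).1.length - 1) (by omega)
          have hcount := sorted_sublist_cols t2 h2 (s ++ [c]) hsort (by rw [← hw] at hsub; exact hsub)
          simp only [List.length_append, List.length_singleton, cols] at hcount
          simp only [cols, List.headD_cons]
          omega
    | cons r0 t1' =>
      rw [tabProd, insertWord_cons]
      have hr0 : r0.Pairwise (· ≤ ·) := (h1.1 r0 (List.mem_cons_self)).2
      have hinv := inv_rowInsertWord (rowRead t2) r0 r0 (inv_self r0 hr0)
      rcases Nat.eq_zero_or_pos (rowInsertWord r0 (rowRead t2)).1.length with h0 | hpos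
      · simp [cols, h0]
      · obtain ⟨s, c, hsub, hsort, hlen, -⟩ :=
          hinv ((rowInsertWord r0 (rowRead t2)).1.length - 1) (by omega)
        obtain ⟨u, v, hwv, hu, hv⟩ := List.sublist_append_iff.1 hsub
        have hvsort : v.Pairwise (· ≤ ·) := by
          refine List.Pairwise.sublist ?_ hsort
          rw [hwv]
          exact List.sublist_append_right u v
        have hvc := sorted_sublist_cols t2 h2 v hvsort hv
        have hul : u.length ≤ r0.length := hu.length_le
        have hlen2 : s.length + 1 = u.length + v.length := by
          have := congrArg List.length hwv
          simpa using this
        simp only [cols] at hvc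
        simp only [cols, List.headD_cons]
        omega
end

section
/- Every column commutes in the plactic monoid with each of its subcolumns: if c is a strictly decreasing word over A and c' is obtained from c by deleting some letters, then c c' = c' c holds in Pl_A. -/
variable {α : Type*} [LinearOrder α]

/-- The Knuth relations on the free monoid. -/
inductive KnuthRel {α : Type*} [LinearOrder α] : FreeMonoid α → FreeMonoid α → Prop
  | col {x y z : α} : x ≤ y → y < z →
      KnuthRel (FreeMonoid.of x * FreeMonoid.of z * FreeMonoid.of y)
               (FreeMonoid.of z * FreeMonoid.of x * FreeMonoid.of y)
  | row {x y z : α} : x < y → y ≤ z →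
      KnuthRel (FreeMonoid.of y * FreeMonoid.of x * FreeMonoid.of z)
               (FreeMonoid.of y * FreeMonoid.of z * FreeMonoid.of x)

/-- The plactic monoid: the quotient of the free monoid on `α` by the
Knuth relations. -/
abbrev Plactic (α : Type*) [LinearOrder α] :=
  (conGen (KnuthRel (α := α))).Quotient

/-- The class of a word in the plactic monoid. -/
def plMk (w : List α) : Plactic α :=
  Con.mk' _ (FreeMonoid.ofList w)

lemma plMk_append (u v : List α) : plMk (u ++ v) = plMk u * plMk v := by
  simp [plMk, FreeMonoid.ofList_append]

lemma plMk_of_knuth {u v : FreeMonoid α} (h : KnuthRel u v) :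
    (Con.mk' (conGen (KnuthRel (α := α))) u) = Con.mk' _ v :=
  Con.eq _ |>.mpr (ConGen.Rel.of _ _ h)

lemma plMk_triple (x y z : α) :
    plMk [x, y, z] = Con.mk' (conGen (KnuthRel (α := α)))
      (FreeMonoid.of x * FreeMonoid.of y * FreeMonoid.of z) := by
  simp [plMk, FreeMonoid.ofList_cons, FreeMonoid.ofList_singleton, mul_assoc]

lemma plMk_col {x y z : α} (h1 : x ≤ y) (h2 : y < z) :
    plMk [x, z, y] = plMk [z, x, y] := by
  rw [plMk_triple, plMk_triple]; exact plMk_of_knuth (KnuthRel.col h1 h2)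

lemma plMk_row {x y z : α} (h1 : x < y) (h2 : y ≤ z) :
    plMk [y, x, z] = plMk [y, z, x] := by
  rw [plMk_triple, plMk_triple]; exact plMk_of_knuth (KnuthRel.row h1 h2)

/-- Lemma B: move a large letter `a` leftwards through a column `u`
past all of `u`, provided a letter `b > u` stands in front. -/
lemma lemB (a b : α) (u : List α) (hu : u.Pairwise (· > ·))
    (hub : ∀ y ∈ u, y < b) (hba : b ≤ a) :
    plMk ([b] ++ u ++ [a]) = plMk ([b] ++ [a] ++ u) := by
  induction u generalizing b with
  | nil => rfl
  | cons c v ih =>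
    have hcv : ∀ y ∈ v, y < c := fun y hy => (List.pairwise_cons.mp hu).1 y hy
    have hv : v.Pairwise (· > ·) := (List.pairwise_cons.mp hu).2
    have hcb : c < b := hub c (by simp)
    have step1 : plMk ([b] ++ (c :: v) ++ [a]) = plMk ([b] ++ ([c] ++ [a] ++ v)) := by
      have := ih c hv hcv (le_of_lt (lt_of_lt_of_le hcb hba))
      calc plMk ([b] ++ (c :: v) ++ [a]) = plMk [b] * plMk ([c] ++ v ++ [a]) := by
              rw [← plMk_append]; congr 1
        _ = plMk [b] * plMk ([c] ++ [a] ++ v) := by rw [this]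
        _ = plMk ([b] ++ ([c] ++ [a] ++ v)) := (plMk_append _ _).symm
    have step2 : plMk ([b, c, a] ++ v) = plMk ([b, a, c] ++ v) := by
      rw [plMk_append, plMk_append, plMk_row hcb hba]
    calc plMk ([b] ++ (c :: v) ++ [a]) = plMk ([b] ++ ([c] ++ [a] ++ v)) := step1
      _ = plMk ([b, c, a] ++ v) := by congr 1
      _ = plMk ([b, a, c] ++ v) := step2
      _ = plMk ([b] ++ [a] ++ (c :: v)) := by congr 1

/-- Lemma M: a column commutes with each of its letters. -/
lemma lemM (c : List α) (hc : c.Pairwise (· > ·)) (x : α) (hx : x ∈ c) :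
    plMk (c ++ [x]) = plMk ([x] ++ c) := by
  induction c with
  | nil => cases hx
  | cons a t ih =>
    have hta : ∀ y ∈ t, y < a := fun y hy => (List.pairwise_cons.mp hc).1 y hy
    have ht : t.Pairwise (· > ·) := (List.pairwise_cons.mp hc).2
    rcases List.mem_cons.mp hx with rfl | hxt
    · -- x = a
      cases t with
      | nil => rfl
      | cons b u =>
        have hub : ∀ y ∈ u, y < b := fun y hy => (List.pairwise_cons.mp ht).1 y hy
        have hba : b < x := hta b (by simp)
        calc plMk ((x :: b :: u) ++ [x])
            = plMk [x] * plMk ([b] ++ u ++ [x]) := by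
              rw [← plMk_append]; congr 1
          _ = plMk [x] * plMk ([b] ++ [x] ++ u) := by
              rw [lemB x b u (List.pairwise_cons.mp ht).2 hub (le_of_lt hba)]
          _ = plMk ([x, b, x] ++ u) := by rw [← plMk_append]; congr 1
          _ = plMk ([x, x, b] ++ u) := by
              rw [plMk_append, plMk_append, plMk_row hba (le_refl x)]
          _ = plMk ([x] ++ (x :: b :: u)) := by congr 1
    · -- x ∈ t
      cases t with
      | nil => cases hxt
      | cons b u =>
        have hxb : x ≤ b := by
          rcases List.mem_cons.mp hxt with rfl | hxu
          · exact le_refl x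
          · exact le_of_lt ((List.pairwise_cons.mp ht).1 x hxu)
        have hba : b < a := hta b (by simp)
        calc plMk ((a :: b :: u) ++ [x])
            = plMk [a] * plMk ((b :: u) ++ [x]) := by
              rw [← plMk_append]; congr 1
          _ = plMk [a] * plMk ([x] ++ (b :: u)) := by rw [ih ht hxt]
          _ = plMk ([a, x, b] ++ u) := by rw [← plMk_append]; congr 1
          _ = plMk ([x, a, b] ++ u) := by
              rw [plMk_append, plMk_append,
                (plMk_col hxb hba).symm]
          _ = plMk ([x] ++ (a :: b :: u)) := by congr 1

lemma comm_of_mem (c : List α) (hc : c.Pairwise (· > ·)) :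
    ∀ w : List α, (∀ x ∈ w, x ∈ c) → plMk (α := α) c * plMk w = plMk w * plMk c := by
  intro w
  induction w with
  | nil => intro _; simp [plMk, FreeMonoid.ofList_nil]
  | cons x s ih =>
    intro hw
    have hx : x ∈ c := hw x (by simp)
    have hs : ∀ y ∈ s, y ∈ c := fun y hy => hw y (List.mem_cons_of_mem _ hy)
    have hxs : plMk (x :: s) = plMk [x] * plMk s := by
      rw [← plMk_append]; congr 1
    rw [hxs, ← mul_assoc, ← plMk_append, lemM c hc x hx, plMk_append,
      mul_assoc, ih hs, ← mul_assoc]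

/-- Every column commutes in the plactic monoid with each of its subcolumns:
if `c` is strictly decreasing and `c'` is obtained from `c` by deleting some
letters, then `c c' = c' c` in `Pl_α`. -/
theorem column_commutes_with_subcolumn (c c' : List α)
    (hc : IsCol c) (hsub : c'.Sublist c) :
    plMk (α := α) c * plMk c' = plMk c' * plMk c :=
  comm_of_mem c hc c' (fun _ hx => hsub.subset hx)
end

section
/- For any idempotent braided set (X, σ), the tautological map from the set of normal words Norm(X,σ) (words x1...xk with σ(x_j, x_{j+1}) = (x_j, x_{j+1}) for all j) to the structure monoid M(X,σ) is a bijection; every element of M(X,σ) has a unique normal form, computed by applying the longest element Δ_k = b1 (b2 b1) ⋯ (b_{k-1} ⋯ b2 b1) of the Coxeter monoid to any representative word of length k. -/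
variable {X : Type*}

/-- The map `σ × Id` on triples. -/
def m12 (σ : X × X → X × X) : X × X × X → X × X × X :=
  fun p => ((σ (p.1, p.2.1)).1, (σ (p.1, p.2.1)).2, p.2.2)

/-- The map `Id × σ` on triples. -/
def m23 (σ : X × X → X × X) : X × X × X → X × X × X :=
  fun p => (p.1, σ (p.2.1, p.2.2))

/-- A braiding: a set-theoretic solution of the Yang–Baxter equation. -/
def IsBraiding (σ : X × X → X × X) : Prop :=
  ∀ p : X × X × X, m12 σ (m23 σ (m12 σ p)) = m23 σ (m12 σ (m23 σ p))

/-- Apply `σ` to the first two entries of a list. -/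
def step (σ : X × X → X × X) : List X → List X
  | x :: y :: l => (σ (x, y)).1 :: (σ (x, y)).2 :: l
  | l => l

/-- The action of the braid generator `b_{i+1}` on words: apply `σ` at
(0-based) position `i`. -/
def applyAt (σ : X × X → X × X) : ℕ → List X → List X
  | 0, l => step σ l
  | _ + 1, [] => []
  | n + 1, x :: l => x :: applyAt σ n l

/-- A word is normal when every pair of consecutive letters is fixed by the
braiding. -/
def IsNormal (σ : X × X → X × X) (l : List X) : Prop :=
  l.Chain' fun x y => σ (x, y) = (x, y)

/-- The defining relations of the structure monoid `M(X, σ)`: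
`x y = y' x'` whenever `σ (x, y) = (y', x')`. -/
inductive StructRel (σ : X × X → X × X) : FreeMonoid X → FreeMonoid X → Prop
  | rel (x y : X) : StructRel σ (FreeMonoid.of x * FreeMonoid.of y)
      (FreeMonoid.of (σ (x, y)).1 * FreeMonoid.of (σ (x, y)).2)

/-- The structure monoid of a braided set. -/
abbrev StructMonoid (σ : X × X → X × X) := (conGen (StructRel σ)).Quotient

/-- The tautological map from words to the structure monoid. -/
def monMk (σ : X × X → X × X) (l : List X) : StructMonoid σ :=
  Con.mk' _ (FreeMonoid.ofList l)

/-- The block `B_j = b_j ⋯ b_2 b_1` acting on words (`b_1` acting first). -/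
def blockB (σ : X × X → X × X) : ℕ → List X → List X
  | 0, l => l
  | j + 1, l => applyAt σ j (blockB σ j l)

/-- The longest element `Δ_{j+1} = B_1 B_2 ⋯ B_j` of the Coxeter monoid acting
on words (the block `B_j` acting first). -/
def delta (σ : X × X → X × X) : ℕ → List X → List X
  | 0, l => l
  | j + 1, l => delta σ j (blockB σ (j + 1) l)

section Aux

variable {X : Type*} (σ : X × X → X × X)

theorem applyAt_nil (i : ℕ) : applyAt σ i [] = [] := by
  cases i <;> rfl

theorem length_step (l : List X) : (step σ l).length = l.length := by
  match l with
  | [] => rfl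
  | [x] => rfl
  | x :: y :: t => rfl

theorem length_applyAt (i : ℕ) (l : List X) : (applyAt σ i l).length = l.length := by
  induction i generalizing l with
  | zero => exact length_step σ l
  | succ n ih =>
    cases l with
    | nil => rfl
    | cons x t => simp [applyAt, ih]

theorem applyAt_eq_self (i : ℕ) (l : List X) (h : l.length ≤ i + 1) :
    applyAt σ i l = l := by
  induction i generalizing l with
  | zero =>
    match l, h with
    | [], _ => rfl
    | [x], _ => rfl
  | succ n ih =>
    cases l with
    | nil => rfl
    | cons x t => simp only [applyAt]; rw [ih t (by simpa using h)]

theorem applyAt_append_left (i : ℕ) (a c : List X) (h : i + 2 ≤ a.length) :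
    applyAt σ i (a ++ c) = applyAt σ i a ++ c := by
  induction i generalizing a with
  | zero =>
    match a, h with
    | x :: y :: t, _ => rfl
  | succ n ih =>
    match a, h with
    | x :: t, h =>
      simp only [List.cons_append, applyAt, List.cons.injEq, true_and]
      exact ih t (by simpa using h)

theorem applyAt_append_right (i : ℕ) (a c : List X) :
    applyAt σ (a.length + i) (a ++ c) = a ++ applyAt σ i c := by
  induction a with
  | nil => simp
  | cons x t ih =>
    have : (x :: t).length + i = (t.length + i) + 1 := by simp; omega
    rw [this]
    simp only [List.cons_append, applyAt, List.cons.injEq, true_and]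
    exact ih

variable (hidem : ∀ p, σ (σ p) = σ p)

include hidem in
theorem applyAt_applyAt (i : ℕ) (l : List X) :
    applyAt σ i (applyAt σ i l) = applyAt σ i l := by
  induction i generalizing l with
  | zero =>
    match l with
    | [] => rfl
    | [x] => rfl
    | x :: y :: t =>
      have : σ ((σ (x, y)).1, (σ (x, y)).2) = σ (x, y) := by
        rw [show ((σ (x, y)).1, (σ (x, y)).2) = σ (x, y) from rfl, hidem]
      simp only [applyAt, step]
      rw [this]
  | succ n ih =>
    cases l with
    | nil => rfl
    | cons x t => simp only [applyAt]; rw [ih]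

theorem applyAt_comm (i j : ℕ) (l : List X) (h : i + 2 ≤ j) :
    applyAt σ i (applyAt σ j l) = applyAt σ j (applyAt σ i l) := by
  induction i generalizing j l with
  | zero =>
    obtain ⟨j', rfl⟩ : ∃ j', j = j' + 2 := ⟨j - 2, by omega⟩
    match l with
    | [] => rfl
    | [x] => rfl
    | x :: y :: t =>
      show step σ (x :: applyAt σ (j' + 1) (y :: t)) = _
      simp only [applyAt, step]
  | succ n ih =>
    obtain ⟨j', rfl⟩ : ∃ j', j = j' + 1 := ⟨j - 1, by omega⟩
    cases l with
    | nil => rfl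
    | cons x t =>
      simp only [applyAt, List.cons.injEq, true_and]
      exact ih j' t (by omega)

variable (hYB : IsBraiding σ)

include hidem hYB in
theorem applyAt_braid (i : ℕ) (l : List X) :
    applyAt σ i (applyAt σ (i + 1) (applyAt σ i l)) =
      applyAt σ (i + 1) (applyAt σ i (applyAt σ (i + 1) l)) := by
  induction i generalizing l with
  | zero =>
    match l with
    | [] => rfl
    | [x] => rfl
    | [x, y] =>
      show step σ (applyAt σ 1 (step σ [x, y])) = applyAt σ 1 (step σ (applyAt σ 1 [x, y]))
      have h1 : ∀ a b : X, applyAt σ 1 [a, b] = [a, b] := fun a b => rfl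
      rw [show step σ [x, y] = [(σ (x,y)).1, (σ (x,y)).2] from rfl, h1, h1]
      show step σ [(σ (x,y)).1, (σ (x,y)).2] = _
      simp only [step]
      have : σ ((σ (x, y)).1, (σ (x, y)).2) = σ (x, y) := by
        rw [show ((σ (x, y)).1, (σ (x, y)).2) = σ (x, y) from rfl, hidem]
      rw [this]
      exact (h1 _ _).symm
    | x :: y :: z :: t =>
      have key := hYB (x, y, z)
      have e12 : ∀ (p : X × X × X) (t : List X),
          applyAt σ 0 (p.1 :: p.2.1 :: p.2.2 :: t) =
            (m12 σ p).1 :: (m12 σ p).2.1 :: (m12 σ p).2.2 :: t := fun p t => rfl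
      have e23 : ∀ (p : X × X × X) (t : List X),
          applyAt σ 1 (p.1 :: p.2.1 :: p.2.2 :: t) =
            (m23 σ p).1 :: (m23 σ p).2.1 :: (m23 σ p).2.2 :: t := fun p t => rfl
      calc applyAt σ 0 (applyAt σ 1 (applyAt σ 0 (x :: y :: z :: t)))
          = applyAt σ 0 (applyAt σ 1 ((m12 σ (x,y,z)).1 :: (m12 σ (x,y,z)).2.1 ::
              (m12 σ (x,y,z)).2.2 :: t)) := by rw [e12 (x,y,z)]
        _ = (m12 σ (m23 σ (m12 σ (x,y,z)))).1 :: (m12 σ (m23 σ (m12 σ (x,y,z)))).2.1 ::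
              (m12 σ (m23 σ (m12 σ (x,y,z)))).2.2 :: t := by rw [e23, e12]
        _ = (m23 σ (m12 σ (m23 σ (x,y,z)))).1 :: (m23 σ (m12 σ (m23 σ (x,y,z)))).2.1 ::
              (m23 σ (m12 σ (m23 σ (x,y,z)))).2.2 :: t := by rw [key]
        _ = applyAt σ 1 (applyAt σ 0 (applyAt σ 1 (x :: y :: z :: t))) := by
              rw [e23 (x,y,z), e12, e23]
  | succ n ih =>
    cases l with
    | nil => rfl
    | cons x t =>
      show applyAt σ (n+1) (applyAt σ (n+2) (x :: applyAt σ n t)) = _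
      show applyAt σ (n+1) (x :: applyAt σ (n+1) (applyAt σ n t)) = _
      show x :: applyAt σ n (applyAt σ (n+1) (applyAt σ n t)) = _
      rw [ih t]
      rfl

end Aux
section Aux2

variable {X : Type*} (σ : X × X → X × X)

theorem length_blockB (n : ℕ) (l : List X) : (blockB σ n l).length = l.length := by
  induction n generalizing l with
  | zero => rfl
  | succ j ih => rw [blockB, length_applyAt, ih]

theorem length_delta (n : ℕ) (l : List X) : (delta σ n l).length = l.length := by
  induction n generalizing l with
  | zero => rfl
  | succ j ih => rw [delta, ih, length_blockB]

theorem applyAt_blockB_comm (n m : ℕ) (l : List X) (h : n + 1 ≤ m) :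
    applyAt σ m (blockB σ n l) = blockB σ n (applyAt σ m l) := by
  induction n generalizing l with
  | zero => rfl
  | succ j ih =>
    rw [blockB, blockB, ← applyAt_comm σ j m _ (by omega), ih _ (by omega)]

theorem applyAt_delta_comm (n m : ℕ) (l : List X) (h : n + 1 ≤ m) :
    applyAt σ m (delta σ n l) = delta σ n (applyAt σ m l) := by
  induction n generalizing l with
  | zero => rfl
  | succ j ih =>
    rw [delta, delta, ih _ (by omega), applyAt_blockB_comm σ _ m _ (by omega)]

variable (hidem : ∀ p, σ (σ p) = σ p) (hYB : IsBraiding σ)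

include hidem hYB in
theorem blockB_shift (n j : ℕ) (l : List X) (h : j + 1 ≤ n) :
    applyAt σ j (blockB σ (n + 1) l) = blockB σ (n + 1) (applyAt σ (j + 1) l) := by
  induction n generalizing j l with
  | zero => omega
  | succ n ih =>
    rcases Nat.lt_or_ge j n with hj | hj
    · rw [blockB, applyAt_comm σ j (n + 1) _ (by omega), ih j _ (by omega),
        ← blockB, show blockB σ (n+1+1) (applyAt σ (j+1) l)
          = applyAt σ (n+1) (blockB σ (n+1) (applyAt σ (j+1) l)) from rfl]
    · have hj' : j = n := by omega
      subst hj'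
      calc applyAt σ j (blockB σ (j + 2) l)
          = applyAt σ j (applyAt σ (j+1) (applyAt σ j (blockB σ j l))) := rfl
        _ = applyAt σ (j+1) (applyAt σ j (applyAt σ (j+1) (blockB σ j l))) :=
            applyAt_braid σ hidem hYB j _
        _ = applyAt σ (j+1) (applyAt σ j (blockB σ j (applyAt σ (j+1) l))) := by
            rw [applyAt_blockB_comm σ j (j+1) _ (by omega)]
        _ = blockB σ (j + 2) (applyAt σ (j + 1) l) := rfl

include hidem in
theorem blockB_absorb0 (n : ℕ) (l : List X) :
    blockB σ (n + 1) (applyAt σ 0 l) = blockB σ (n + 1) l := by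
  induction n generalizing l with
  | zero => exact applyAt_applyAt σ hidem 0 l
  | succ n ih => rw [blockB, ih, ← blockB]

include hidem hYB in
theorem delta_absorb_right (n m : ℕ) (l : List X) (h : m + 1 ≤ n) :
    delta σ n (applyAt σ m l) = delta σ n l := by
  induction n generalizing m l with
  | zero => omega
  | succ n ih =>
    rw [delta, delta]
    cases m with
    | zero => rw [blockB_absorb0 σ hidem]
    | succ m' =>
      rw [← blockB_shift σ hidem hYB n m' l (by omega), ih m' _ (by omega)]

/-- `R_{n} = b_1 b_2 ⋯ b_n` acting on words, with `b_n` acting first. -/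
def revR (σ : X × X → X × X) : ℕ → List X → List X
  | 0, l => l
  | n + 1, l => revR σ n (applyAt σ n l)

theorem applyAt_revR_comm (n m : ℕ) (l : List X) (h : n + 1 ≤ m) :
    applyAt σ m (revR σ n l) = revR σ n (applyAt σ m l) := by
  induction n generalizing l with
  | zero => rfl
  | succ j ih =>
    rw [revR, revR, ih _ (by omega), ← applyAt_comm σ j m _ (by omega)]

include hidem in
theorem revR_absorb0 (n : ℕ) (l : List X) :
    applyAt σ 0 (revR σ (n + 1) l) = revR σ (n + 1) l := by
  induction n generalizing l with
  | zero => exact applyAt_applyAt σ hidem 0 l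
  | succ n ih => rw [revR, ih]

include hidem hYB in
theorem revR_shift (n j : ℕ) (l : List X) (h : j + 1 ≤ n) :
    applyAt σ (j + 1) (revR σ (n + 1) l) = revR σ (n + 1) (applyAt σ j l) := by
  induction n generalizing j l with
  | zero => omega
  | succ n ih =>
    rcases Nat.lt_or_ge j n with hj | hj
    · rw [revR, ih j _ (by omega), applyAt_comm σ j (n + 1) _ (by omega), ← revR]
    · have hj' : j = n := by omega
      subst hj'
      calc applyAt σ (j + 1) (revR σ (j + 2) l)
          = applyAt σ (j+1) (revR σ j (applyAt σ j (applyAt σ (j+1) l))) := rfl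
        _ = revR σ j (applyAt σ (j+1) (applyAt σ j (applyAt σ (j+1) l))) := by
            rw [applyAt_revR_comm σ j (j+1) _ (by omega)]
        _ = revR σ j (applyAt σ j (applyAt σ (j+1) (applyAt σ j l))) := by
            rw [applyAt_braid σ hidem hYB j]
        _ = revR σ (j + 2) (applyAt σ j l) := rfl

theorem delta_alt (n : ℕ) (l : List X) :
    delta σ (n + 1) l = revR σ (n + 1) (delta σ n l) := by
  induction n generalizing l with
  | zero => rfl
  | succ n ih =>
    calc delta σ (n + 2) l = delta σ (n + 1) (blockB σ (n + 2) l) := rfl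
      _ = revR σ (n + 1) (delta σ n (applyAt σ (n + 1) (blockB σ (n + 1) l))) := by
          rw [ih]; rfl
      _ = revR σ (n + 1) (applyAt σ (n + 1) (delta σ n (blockB σ (n + 1) l))) := by
          rw [applyAt_delta_comm σ n (n + 1) _ (by omega)]
      _ = revR σ (n + 2) (delta σ (n + 1) l) := rfl

include hidem hYB in
theorem delta_absorb_left (n j : ℕ) (l : List X) (h : j + 1 ≤ n) :
    applyAt σ j (delta σ n l) = delta σ n l := by
  induction n generalizing j l with
  | zero => omega
  | succ n ih =>
    rw [delta_alt σ]
    cases j with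
    | zero => exact revR_absorb0 σ hidem n _
    | succ j' =>
      rw [revR_shift σ hidem hYB n j' _ (by omega), ih j' _ (by omega)]

end Aux2
section Aux3

open FreeMonoid

variable {X : Type*} (σ : X × X → X × X)

/-- The normal form of a word. -/
def NF (l : List X) : List X := delta σ (l.length - 1) l

theorem length_NF (l : List X) : (NF σ l).length = l.length := by
  rw [NF, length_delta]

variable (hidem : ∀ p, σ (σ p) = σ p) (hYB : IsBraiding σ)

include hidem hYB in
theorem NF_applyAt (i : ℕ) (l : List X) : NF σ (applyAt σ i l) = NF σ l := by
  by_cases h : i + 2 ≤ l.length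
  · rw [NF, NF, length_applyAt]
    exact delta_absorb_right σ hidem hYB (l.length - 1) i l (by omega)
  · rw [applyAt_eq_self σ i l (by omega)]

include hidem hYB in
theorem NF_left_step (i : ℕ) (a c : List X) :
    NF σ (applyAt σ i a ++ c) = NF σ (a ++ c) := by
  by_cases h : i + 2 ≤ a.length
  · rw [← applyAt_append_left σ i a c h, NF_applyAt σ hidem hYB]
  · rw [applyAt_eq_self σ i a (by omega)]

include hidem hYB in
theorem NF_right_step (i : ℕ) (a c : List X) :
    NF σ (a ++ applyAt σ i c) = NF σ (a ++ c) := by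
  rw [← applyAt_append_right σ i a c, NF_applyAt σ hidem hYB]

include hidem hYB in
theorem NF_blockB_left (j : ℕ) (a c : List X) :
    NF σ (blockB σ j a ++ c) = NF σ (a ++ c) := by
  induction j with
  | zero => rfl
  | succ j ih => rw [blockB, NF_left_step σ hidem hYB, ih]

include hidem hYB in
theorem NF_delta_left (j : ℕ) (a c : List X) :
    NF σ (delta σ j a ++ c) = NF σ (a ++ c) := by
  induction j generalizing a with
  | zero => rfl
  | succ j ih => rw [delta, ih, NF_blockB_left σ hidem hYB]

include hidem hYB in
theorem NF_blockB_right (j : ℕ) (a c : List X) :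
    NF σ (a ++ blockB σ j c) = NF σ (a ++ c) := by
  induction j with
  | zero => rfl
  | succ j ih => rw [blockB, NF_right_step σ hidem hYB, ih]

include hidem hYB in
theorem NF_delta_right (j : ℕ) (a c : List X) :
    NF σ (a ++ delta σ j c) = NF σ (a ++ c) := by
  induction j generalizing c with
  | zero => rfl
  | succ j ih => rw [delta, ih, NF_blockB_right σ hidem hYB]

include hidem hYB in
theorem NF_NF_left (a c : List X) : NF σ (NF σ a ++ c) = NF σ (a ++ c) :=
  NF_delta_left σ hidem hYB _ a c

include hidem hYB in
theorem NF_NF_right (a c : List X) : NF σ (a ++ NF σ c) = NF σ (a ++ c) :=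
  NF_delta_right σ hidem hYB _ a c

theorem normal_of_fixed : ∀ l : List X, (∀ j, applyAt σ j l = l) → IsNormal σ l
  | [], _ => List.isChain_nil
  | [x], _ => List.isChain_singleton x
  | x :: y :: u, h => by
    simp only [IsNormal, List.Chain', List.isChain_cons_cons]
    refine ⟨?_, normal_of_fixed (y :: u) ?_⟩
    · have h0 := h 0
      simp only [applyAt, step, List.cons.injEq] at h0
      exact Prod.ext h0.1 h0.2.1
    · intro j
      have hj := h (j + 1)
      simp only [applyAt, List.cons.injEq, true_and] at hj
      exact hj

theorem applyAt_of_normal : ∀ (l : List X), IsNormal σ l → ∀ i, applyAt σ i l = l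
  | [], _, i => applyAt_nil σ i
  | [x], _, i => applyAt_eq_self σ i [x] (by simp)
  | x :: y :: u, h, 0 => by
    simp only [IsNormal, List.Chain', List.isChain_cons_cons] at h
    show step σ _ = _
    simp only [step, h.1]
  | x :: y :: u, h, i + 1 => by
    simp only [IsNormal, List.Chain', List.isChain_cons_cons] at h
    simp only [applyAt, List.cons.injEq, true_and]
    exact applyAt_of_normal (y :: u) h.2 i

theorem blockB_of_normal (l : List X) (h : IsNormal σ l) (n : ℕ) : blockB σ n l = l := by
  induction n with
  | zero => rfl
  | succ j ih => rw [blockB, ih, applyAt_of_normal σ l h]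

theorem delta_of_normal (l : List X) (h : IsNormal σ l) (n : ℕ) : delta σ n l = l := by
  induction n with
  | zero => rfl
  | succ j ih => rw [delta, blockB_of_normal σ l h, ih]

include hidem hYB in
theorem NF_normal (l : List X) : IsNormal σ (NF σ l) := by
  apply normal_of_fixed
  intro j
  by_cases h : j + 2 ≤ l.length
  · exact delta_absorb_left σ hidem hYB (l.length - 1) j l (by omega)
  · exact applyAt_eq_self σ j _ (by rw [length_NF]; omega)

theorem monMk_cons (x : X) (t : List X) :
    monMk σ (x :: t) = Con.mk' _ (FreeMonoid.of x) * monMk σ t := by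
  rw [monMk, FreeMonoid.ofList_cons, map_mul]
  rfl

include hidem in
theorem monMk_applyAt (i : ℕ) (l : List X) : monMk σ (applyAt σ i l) = monMk σ l := by
  induction i generalizing l with
  | zero =>
    match l with
    | [] => rfl
    | [x] => rfl
    | x :: y :: u =>
      show monMk σ ((σ (x, y)).1 :: (σ (x, y)).2 :: u) = monMk σ (x :: y :: u)
      rw [monMk_cons, monMk_cons, monMk_cons σ x, monMk_cons, ← mul_assoc, ← mul_assoc,
        ← map_mul, ← map_mul]
      congr 1
      have : conGen (StructRel σ) (FreeMonoid.of x * FreeMonoid.of y)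
          (FreeMonoid.of (σ (x, y)).1 * FreeMonoid.of (σ (x, y)).2) :=
        ConGen.Rel.of _ _ (StructRel.rel x y)
      exact ((Con.eq _).2 this).symm
  | succ n ih =>
    cases l with
    | nil => rfl
    | cons x t =>
      show monMk σ (x :: applyAt σ n t) = _
      rw [monMk_cons, monMk_cons, ih]

include hidem in
theorem monMk_blockB (n : ℕ) (l : List X) : monMk σ (blockB σ n l) = monMk σ l := by
  induction n with
  | zero => rfl
  | succ j ih => rw [blockB, monMk_applyAt σ hidem, ih]

include hidem in
theorem monMk_delta (n : ℕ) (l : List X) : monMk σ (delta σ n l) = monMk σ l := by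
  induction n generalizing l with
  | zero => rfl
  | succ j ih => rw [delta, ih, monMk_blockB σ hidem]

include hidem in
theorem monMk_NF (l : List X) : monMk σ (NF σ l) = monMk σ l :=
  monMk_delta σ hidem _ l

/-- The congruence of having equal normal forms. -/
def nfCon (hidem : ∀ p, σ (σ p) = σ p) (hYB : IsBraiding σ) : Con (FreeMonoid X) where
  r a b := NF σ (FreeMonoid.toList a) = NF σ (FreeMonoid.toList b)
  iseqv := ⟨fun _ => rfl, Eq.symm, Eq.trans⟩
  mul' := by
    intro a b c d h1 h2
    show NF σ (FreeMonoid.toList (a * c)) = NF σ (FreeMonoid.toList (b * d))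
    rw [FreeMonoid.toList_mul, FreeMonoid.toList_mul,
      ← NF_NF_left σ hidem hYB a.toList, ← NF_NF_right σ hidem hYB _ c.toList, h1, h2,
      NF_NF_right σ hidem hYB, NF_NF_left σ hidem hYB]

include hidem hYB in
theorem NF_eq_of_rel (l1 l2 : List X)
    (h : conGen (StructRel σ) (FreeMonoid.ofList l1) (FreeMonoid.ofList l2)) :
    NF σ l1 = NF σ l2 := by
  have hle : conGen (StructRel σ) ≤ nfCon σ hidem hYB := by
    apply Con.conGen_le.2
    intro a b hab
    cases hab with
    | rel x y =>
      show NF σ (FreeMonoid.toList _) = NF σ (FreeMonoid.toList _)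
      rw [FreeMonoid.toList_mul, FreeMonoid.toList_mul, FreeMonoid.toList_of,
        FreeMonoid.toList_of, FreeMonoid.toList_of, FreeMonoid.toList_of]
      have key : σ ((σ (x, y)).1, (σ (x, y)).2) = σ (x, y) := by
        rw [show ((σ (x, y)).1, (σ (x, y)).2) = σ (x, y) from rfl, hidem]
      show NF σ [x, y] = NF σ [(σ (x, y)).1, (σ (x, y)).2]
      simp only [NF, List.length_cons, List.length_nil, delta, blockB, applyAt, step]
      rw [key]
  have := hle h
  have this' : NF σ (FreeMonoid.toList (FreeMonoid.ofList l1)) =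
      NF σ (FreeMonoid.toList (FreeMonoid.ofList l2)) := this
  simpa [FreeMonoid.toList_ofList] using this'

end Aux3


/-- For an idempotent braided set `(X, σ)`, the tautological map from normal
words to the structure monoid `M(X, σ)` is a bijection; every element of
`M(X, σ)` has a unique normal form, obtained by applying the longest element
`Δ_k = b₁ (b₂b₁) ⋯ (b_{k-1} ⋯ b₂b₁)` of the Coxeter monoid to any
representative word of length `k`. -/
theorem normal_form_idempotent_braiding (σ : X × X → X × X)
    (hYB : IsBraiding σ) (hidem : ∀ p, σ (σ p) = σ p) :
    Function.Bijective (fun l : {l : List X // IsNormal σ l} => monMk σ l.1) ∧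
    ∀ l : List X, IsNormal σ (delta σ (l.length - 1) l) ∧
      monMk σ (delta σ (l.length - 1) l) = monMk σ l := by
  refine ⟨⟨?_, ?_⟩, fun l => ⟨NF_normal σ hidem hYB l, monMk_NF σ hidem l⟩⟩
  · rintro ⟨l1, h1⟩ ⟨l2, h2⟩ h
    simp only at h
    have hc : conGen (StructRel σ) (FreeMonoid.ofList l1) (FreeMonoid.ofList l2) :=
      (Con.eq _).1 h
    have hNF := NF_eq_of_rel σ hidem hYB l1 l2 hc
    rw [NF, NF, delta_of_normal σ l1 h1, delta_of_normal σ l2 h2] at hNF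
    exact Subtype.ext hNF
  · intro m
    obtain ⟨w, rfl⟩ := Con.mk'_surjective (c := conGen (StructRel σ)) m
    refine ⟨⟨NF σ (FreeMonoid.toList w), NF_normal σ hidem hYB _⟩, ?_⟩
    show monMk σ (NF σ (FreeMonoid.toList w)) = _
    rw [monMk_NF σ hidem, monMk, FreeMonoid.ofList_toList]
end

section
/- For a two-letter alphabet A = {1, 2}, identifying rows with pairs (k, l) ∈ ℕ² (k ones followed by l twos), the row braiding is given by σ_R((k1,l1),(k2,l2)) = ((0, min{l1,k2}), (k1 + k2, l1 + l2 − min{l1,k2})), and this map satisfies the Yang–Baxter equation and is idempotent. -/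
variable {α : Type*} [LinearOrder α]

/-- The row over the two-letter alphabet `{1 < 2} ⊆ ℕ` consisting of `k` ones
followed by `l` twos. -/
def rowOf (k l : ℕ) : List ℕ := List.replicate k 1 ++ List.replicate l 2

/-- The row braiding over a two-letter alphabet, in the parametrization of rows
by pairs in `ℕ²`. -/
def sigmaRTwo (p : (ℕ × ℕ) × (ℕ × ℕ)) : (ℕ × ℕ) × (ℕ × ℕ) :=
  ((0, min p.1.2 p.2.1),
    (p.1.1 + p.2.1, p.1.2 + p.2.2 - min p.1.2 p.2.1))

section Aux

lemma rowOf_succ_left (a b : ℕ) : rowOf (a+1) b = 1 :: rowOf a b := by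
  simp [rowOf, List.replicate_succ]

lemma rowOf_append_two (a b : ℕ) : rowOf a (b+1) = rowOf a b ++ [2] := by
  simp [rowOf, List.replicate_succ']

lemma rowOf_append_one (a : ℕ) : rowOf (a+1) 0 = rowOf a 0 ++ [1] := by
  simp [rowOf, List.replicate_succ']

lemma rowInsert_all_le {r : List ℕ} {x : ℕ} (h : ∀ y ∈ r, y ≤ x) :
    rowInsert r x = (r ++ [x], none) := by
  induction r with
  | nil => simp [rowInsert]
  | cons y r ih =>
    simp only [rowInsert]
    rw [if_pos (h y (by simp)), ih (fun z hz => h z (by simp [hz]))]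
    simp

lemma rowInsert_two (a b : ℕ) : rowInsert (rowOf a b) 2 = (rowOf a (b+1), none) := by
  rw [rowInsert_all_le, ← rowOf_append_two]
  intro y hy
  rcases List.mem_append.1 hy with h | h <;>
    simp [List.eq_of_mem_replicate h]

lemma rowInsert_one_flat (a : ℕ) : rowInsert (rowOf a 0) 1 = (rowOf (a+1) 0, none) := by
  rw [rowInsert_all_le, ← rowOf_append_one]
  intro y hy
  simp [rowOf] at hy
  omega

lemma rowInsert_one_bump (a b : ℕ) :
    rowInsert (rowOf a (b+1)) 1 = (rowOf (a+1) b, some 2) := by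
  induction a with
  | zero =>
    simp [rowOf, List.replicate_succ, rowInsert]
  | succ a ih =>
    rw [rowOf_succ_left]
    simp only [rowInsert, if_pos (le_refl 1), ih]
    simp [rowOf_succ_left]

lemma tabInsert_two (a b : ℕ) (t : List (List ℕ)) :
    tabInsert (rowOf a b :: t) 2 = rowOf a (b+1) :: t := by
  simp [tabInsert, rowInsert_two]

lemma tabInsert_one_flat (a : ℕ) (t : List (List ℕ)) :
    tabInsert (rowOf a 0 :: t) 1 = rowOf (a+1) 0 :: t := by
  simp [tabInsert, rowInsert_one_flat]

lemma tabInsert_one_bump (a b : ℕ) (t : List (List ℕ)) :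
    tabInsert (rowOf a (b+1) :: t) 1 = rowOf (a+1) b :: tabInsert t 2 := by
  simp [tabInsert, rowInsert_one_bump]

lemma insertWord_cons_s19 (t : List (List ℕ)) (x : ℕ) (w : List ℕ) :
    insertWord t (x :: w) = insertWord (tabInsert t x) w := rfl

lemma insertWord_append (t : List (List ℕ)) (w1 w2 : List ℕ) :
    insertWord t (w1 ++ w2) = insertWord (insertWord t w1) w2 := by
  simp [insertWord]

lemma insert_twos (a b l : ℕ) (t : List (List ℕ)) :
    insertWord (rowOf a b :: t) (List.replicate l 2) = rowOf a (b+l) :: t := by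
  induction l generalizing b with
  | zero => rfl
  | succ l ih =>
    rw [List.replicate_succ, insertWord_cons_s19, tabInsert_two, ih]
    have h : b + 1 + l = b + (l+1) := by omega
    rw [h]

lemma insert_ones_flat (a k : ℕ) :
    insertWord [rowOf a 0] (List.replicate k 1) = [rowOf (a+k) 0] := by
  induction k generalizing a with
  | zero => rfl
  | succ k ih =>
    rw [List.replicate_succ, insertWord_cons_s19, tabInsert_one_flat, ih]
    have h : a + 1 + k = a + (k+1) := by omega
    rw [h]

lemma insert_ones_two_rows (a b c k : ℕ) :
    insertWord [rowOf a b, rowOf 0 c] (List.replicate k 1) =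
      [rowOf (a+k) (b - min b k), rowOf 0 (c + min b k)] := by
  induction k generalizing a b c with
  | zero => simp [insertWord]
  | succ k ih =>
    rw [List.replicate_succ, insertWord_cons_s19]
    cases b with
    | zero =>
      rw [tabInsert_one_flat, ih]
      have h : a + 1 + k = a + (k + 1) := by omega
      rw [h]
      simp
    | succ b =>
      rw [tabInsert_one_bump, tabInsert_two, ih]
      have h1 : min (b+1) (k+1) = min b k + 1 := by omega
      have h2 : b + 1 - (min b k + 1) = b - min b k := by omega
      have h3 : a + 1 + k = a + (k+1) := by omega
      have h4 : c + 1 + min b k = c + (min b k + 1) := by omega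
      rw [h1, h2, h3, h4]

lemma insert_ones (a b k : ℕ) :
    insertWord [rowOf a b] (List.replicate k 1) =
      if min b k = 0 then [rowOf (a+k) b]
      else [rowOf (a+k) (b - min b k), rowOf 0 (min b k)] := by
  cases k with
  | zero => simp [insertWord]
  | succ k =>
    cases b with
    | zero => simp [insert_ones_flat]
    | succ b =>
      rw [if_neg (by omega)]
      rw [List.replicate_succ, insertWord_cons_s19, tabInsert_one_bump]
      have he : tabInsert ([] : List (List ℕ)) 2 = [rowOf 0 1] := rfl
      rw [he, insert_ones_two_rows]
      have h1 : min (b+1) (k+1) = min b k + 1 := by omega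
      have h2 : b + 1 - (min b k + 1) = b - min b k := by omega
      have h3 : a + 1 + k = a + (k+1) := by omega
      have h4 : 1 + min b k = min b k + 1 := by omega
      rw [h1, h2, h3, h4]

lemma insert_row (a b k l : ℕ) :
    insertWord [rowOf a b] (rowOf k l) =
      if min b k = 0 then [rowOf (a+k) (b+l)]
      else [rowOf (a+k) (b + l - min b k), rowOf 0 (min b k)] := by
  have e : rowOf k l = List.replicate k 1 ++ List.replicate l 2 := rfl
  rw [e, insertWord_append, insert_ones]
  by_cases h : min b k = 0
  · rw [if_pos h, if_pos h, insert_twos]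
  · rw [if_neg h, if_neg h, insert_twos]
    have h2 : b - min b k + l = b + l - min b k := by omega
    rw [h2]

lemma rowRead_rowTab (r : List ℕ) : rowRead (rowTab r) = r := by
  unfold rowTab
  split <;> simp_all [rowRead]

lemma rowOf_eq_nil {k l : ℕ} : rowOf k l = [] ↔ k = 0 ∧ l = 0 := by
  simp [rowOf]

lemma insertWord_nil_eq (w : List ℕ) (h : w ≠ []) :
    insertWord ([] : List (List ℕ)) w = insertWord [[]] w := by
  cases w with
  | nil => simp at h
  | cons x w => rfl

end Aux

/-- For the two-letter alphabet `{1 < 2}`, identifying rows with pairs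
`(k, l) ∈ ℕ²` (`k` ones followed by `l` twos), the row braiding is given by
`σ_R((k₁,l₁),(k₂,l₂)) = ((0, min l₁ k₂), (k₁+k₂, l₁+l₂−min l₁ k₂))`, and this
map satisfies the Yang–Baxter equation and is idempotent. -/
theorem sigmaR_two_letter :
    (∀ k1 l1 k2 l2 : ℕ,
      sigmaR (rowOf k1 l1) (rowOf k2 l2) =
        (rowOf 0 (min l1 k2), rowOf (k1 + k2) (l1 + l2 - min l1 k2))) ∧
    (∀ p : (ℕ × ℕ) × (ℕ × ℕ) × (ℕ × ℕ),
      map12 (fun a b => sigmaRTwo (a, b)) (map23 (fun a b => sigmaRTwo (a, b))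
          (map12 (fun a b => sigmaRTwo (a, b)) p)) =
        map23 (fun a b => sigmaRTwo (a, b)) (map12 (fun a b => sigmaRTwo (a, b))
          (map23 (fun a b => sigmaRTwo (a, b)) p))) ∧
    (∀ p, sigmaRTwo (sigmaRTwo p) = sigmaRTwo p) := by
  refine ⟨?_, ?_, ?_⟩
  · intro k1 l1 k2 l2
    unfold sigmaR tabProd
    rw [rowRead_rowTab]
    by_cases h1 : rowOf k1 l1 = []
    · obtain ⟨hk1, hl1⟩ := rowOf_eq_nil.mp h1
      subst hk1; subst hl1
      rw [rowTab, if_pos h1]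
      by_cases h2 : rowOf k2 l2 = []
      · obtain ⟨hk2, hl2⟩ := rowOf_eq_nil.mp h2
        subst hk2; subst hl2
        rfl
      · rw [insertWord_nil_eq _ h2]
        have e : ([[]] : List (List ℕ)) = [rowOf 0 0] := rfl
        rw [e, insert_row]
        simp [rowOf]
    · rw [rowTab, if_neg h1, insert_row]
      by_cases h : min l1 k2 = 0
      · rw [if_pos h]
        simp [h, show rowOf 0 0 = [] from rfl]
      · rw [if_neg h]
        rfl
  · rintro ⟨⟨a, b⟩, ⟨c, d⟩, ⟨e, f⟩⟩
    simp only [map12, map23, sigmaRTwo]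
    simp only [Prod.mk.injEq, true_and]
    omega
  · rintro ⟨⟨a, b⟩, ⟨c, d⟩⟩
    simp only [sigmaRTwo]
    simp only [Prod.mk.injEq, true_and]
    omega
end
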